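/- arXiv:1811.03015 — 11 statements merged into one kernel-verified Lean document; each statement's English description precedes it below -/
import Mathlib

section
/- For every nonnegative integer n, the identity B_{n+1}^2 - B_n^2 = B_{2n+1} holds; in particular, the difference of the squares of two consecutive balancing numbers is again a balancing number. -/
/-- For every nonnegative integer n, B_{n+1}^2 - B_n^2 = B_{2n+1}. -/
theorem balancing_sq_diff
    (B : ℕ → ℤ) (hB0 : B 0 = 0) (hB1 : B 1 = 1)
    (hB : ∀ n, B (n + 2) = 6 * B (n + 1) - B n) :
    ∀ n : ℕ, B (n + 1) ^ 2 - B n ^ 2 = B (2 * n + 1) := by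
  have key : ∀ n : ℕ, (B (n + 1) ^ 2 - B n ^ 2 = B (2 * n + 1)) ∧
      (B (2 * n + 2) = B (n + 1) * (B (n + 2) - B n)) := by
    intro n
    induction n with
    | zero =>
      constructor
      · simp [hB0, hB1]
      · have h2 := hB 0
        simp only [hB0, hB1] at h2 ⊢
        simp [h2, hB0, hB1]
    | succ k ih =>
      obtain ⟨hp, hq⟩ := ih
      have hc := hB k
      have h3 : B (2 * k + 3) = 6 * B (2 * k + 2) - B (2 * k + 1) := hB (2 * k + 1)
      have h4 : B (2 * k + 4) = 6 * B (2 * k + 3) - B (2 * k + 2) := hB (2 * k + 2)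
      have e1 : 2 * (k + 1) + 1 = 2 * k + 3 := by ring
      have e2 : 2 * (k + 1) + 2 = 2 * k + 4 := by ring
      constructor
      · rw [e1, h3, ← hp, hq, hc]; ring
      · rw [e2, h4, h3, ← hp, hq, hB (k + 1), hc]; ring
  exact fun n => (key n).1
end

section
/- For every odd positive integer m, the identity B_m + 1 = B_{(m+1)/2} · C_{(m-1)/2} holds. -/
/-- For every odd positive integer m, B_m + 1 = B_{(m+1)/2} · C_{(m-1)/2},
where C is the Lucas balancing sequence. -/
theorem balancing_plus_one_factorization
    (B : ℕ → ℤ) (hB0 : B 0 = 0) (hB1 : B 1 = 1)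
    (hB : ∀ n, B (n + 2) = 6 * B (n + 1) - B n)
    (C : ℕ → ℤ) (hC0 : C 0 = 2) (hC1 : C 1 = 6)
    (hC : ∀ n, C (n + 2) = 6 * C (n + 1) - C n) :
    ∀ m : ℕ, 0 < m → Odd m → B m + 1 = B ((m + 1) / 2) * C ((m - 1) / 2) := by
  -- addition formula, proved by a paired (two-step) induction on n
  have add : ∀ m n, 2 * B (m + n) = B m * C n + C m * B n ∧
      2 * B (m + n + 1) = B m * C (n + 1) + C m * B (n + 1) := by
    -- first: C m = 2 B(m+1) - 6 B m
    have key : ∀ m, C m = 2 * B (m + 1) - 6 * B m ∧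
        C (m + 1) = 2 * B (m + 2) - 6 * B (m + 1) := by
      intro m
      induction m with
      | zero =>
        refine ⟨by rw [hC0, hB1, hB0]; ring, by rw [hC1, hB 0, hB0, hB1]; ring⟩
      | succ n ih =>
        refine ⟨ih.2, ?_⟩
        show C (n + 2) = 2 * B (n + 3) - 6 * B (n + 2)
        have e1 := hC n
        have e2 : B (n + 3) = 6 * B (n + 2) - B (n + 1) := hB (n + 1)
        have e3 := hB n
        have i1 := ih.1
        have i2 := ih.2
        linarith
    intro m n
    induction n with
    | zero =>
      constructor
      · rw [hC0, hB0]; ring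
      · rw [hC1, hB1, (key m).1]; ring
    | succ n ih =>
      refine ⟨ih.2, ?_⟩
      have e1 : B (m + (n + 1) + 1) = 6 * B (m + n + 1) - B (m + n) := by
        have := hB (m + n)
        have h2 : m + n + 2 = m + (n + 1) + 1 := by omega
        rwa [h2] at this
      have e2 := hC n
      have e3 := hB n
      have i1 := ih.1
      have i2 := ih.2
      rw [e1, e2, e3]
      ring_nf
      ring_nf at i1 i2
      nlinarith [i1, i2]
  -- determinant identity
  have det : ∀ n, B (n + 1) * C n - B n * C (n + 1) = 2 := by
    intro n
    induction n with
    | zero => rw [hB0, hB1, hC0]; ring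
    | succ n ih =>
      show B (n + 2) * C (n + 1) - B (n + 1) * C (n + 2) = 2
      have e1 := hB n
      have e2 := hC n
      rw [e1, e2]
      nlinarith [ih]
  intro m hm ⟨k, hk⟩
  subst hk
  have h1 : (2 * k + 1 + 1) / 2 = k + 1 := by omega
  have h2 : (2 * k + 1 - 1) / 2 = k := by omega
  rw [h1, h2]
  have ha := (add (k + 1) k).1
  have hd := det k
  have hidx : k + 1 + k = 2 * k + 1 := by omega
  rw [hidx] at ha
  linarith
end

section
/- If m and x are positive integers with B_m = 6^x - 1, then m is odd. -/
/-- If m and x are positive integers with B_m = 6^x - 1, then m is odd. -/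
theorem balancing_eq_six_pow_sub_one_odd
    (B : ℕ → ℤ) (hB0 : B 0 = 0) (hB1 : B 1 = 1)
    (hB : ∀ n, B (n + 2) = 6 * B (n + 1) - B n) :
    ∀ m x : ℕ, 0 < m → 0 < x → B m = 6 ^ x - 1 → Odd m := by
  have key : ∀ n : ℕ, B n % 2 = (n : ℤ) % 2 := by
    intro n
    induction n using Nat.twoStepInduction with
    | zero => simp [hB0]
    | one => simp [hB1]
    | more n ih1 ih2 => rw [hB n]; push_cast; omega
  intro m x hm hx h
  have h6 : (2 : ℤ) ∣ 6 ^ x := dvd_pow (by norm_num) hx.ne'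
  obtain ⟨c, hc⟩ := h6
  have := key m
  rw [Nat.odd_iff]
  omega
end

section
/- If k is a positive integer such that every prime factor of B_k is at most 3 (equivalently, B_k divides some power of 6), then k ≤ 12. -/
/-- If k is a positive integer such that every prime factor of B_k is at most 3,
then k ≤ 12. -/
theorem balancing_smooth_index_bound
    (B : ℕ → ℤ) (hB0 : B 0 = 0) (hB1 : B 1 = 1)
    (hB : ∀ n, B (n + 2) = 6 * B (n + 1) - B n) :
    ∀ k : ℕ, 0 < k → (∀ p : ℕ, p.Prime → (p : ℤ) ∣ B k → p ≤ 3) → k ≤ 12 := by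
  -- monotonicity / positivity
  have hmono : ∀ n, 0 ≤ B n ∧ B n < B (n + 1) := by
    intro n
    induction n with
    | zero => rw [hB0, hB1]; norm_num
    | succ n ih =>
      have h1 := ih.1
      have h2 := ih.2
      refine ⟨by omega, ?_⟩
      show B (n + 1) < B (n + 2)
      have h := hB n
      omega
  have hSM : StrictMono B := strictMono_nat_of_lt_succ fun n => (hmono n).2
  have hB2 : B 2 = 6 := by have := hB 0; rw [hB0, hB1] at this; linarith
  -- parity: 2 ∣ B n ↔ 2 ∣ n
  have hdvd2 : ∀ n, ((2:ℤ) ∣ B n ↔ 2 ∣ n) ∧ ((2:ℤ) ∣ B (n+1) ↔ 2 ∣ (n+1)) := by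
    intro n
    induction n with
    | zero =>
      constructor
      · rw [hB0]; omega
      · show (2:ℤ) ∣ B 1 ↔ 2 ∣ 1
        rw [hB1]; omega
    | succ n ih =>
      refine ⟨ih.2, ?_⟩
      show (2:ℤ) ∣ B (n+2) ↔ 2 ∣ (n+2)
      have h := hB n
      have h1 := ih.1
      omega
  -- mod 3: 3 ∣ B n ↔ 2 ∣ n
  have hdvd3 : ∀ n, ((3:ℤ) ∣ B n ↔ 2 ∣ n) ∧ ((3:ℤ) ∣ B (n+1) ↔ 2 ∣ (n+1)) := by
    intro n
    induction n with
    | zero =>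
      constructor
      · rw [hB0]; omega
      · show (3:ℤ) ∣ B 1 ↔ 2 ∣ 1
        rw [hB1]; omega
    | succ n ih =>
      refine ⟨ih.2, ?_⟩
      show (3:ℤ) ∣ B (n+2) ↔ 2 ∣ (n+2)
      have h := hB n
      have h1 := ih.1
      omega
  -- consecutive terms are coprime
  have hcop : ∀ n, IsCoprime (B (n+1)) (B n) := by
    intro n
    induction n with
    | zero =>
      rw [hB0]
      exact isCoprime_zero_right.mpr (by show IsUnit (B 1); rw [hB1]; exact isUnit_one)
    | succ n ih =>
      show IsCoprime (B (n+2)) (B (n+1))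
      have h := hB n
      have h2 : IsCoprime (-B n + B (n+1) * 6) (B (n+1)) :=
        (ih.neg_right.symm).add_mul_left_left 6
      have h3 : -B n + B (n+1) * 6 = B (n+2) := by rw [h]; ring
      rwa [h3] at h2
  -- addition formula
  have haddf : ∀ n, (∀ m, B (m + n + 1) = B (m+1) * B (n+1) - B m * B n) ∧
      (∀ m, B (m + (n+1) + 1) = B (m+1) * B (n+2) - B m * B (n+1)) := by
    intro n
    induction n with
    | zero =>
      refine ⟨fun m => ?_, fun m => ?_⟩
      · show B (m + 1) = B (m+1) * B 1 - B m * B 0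
        rw [hB0, hB1]; ring
      · show B (m + 2) = B (m+1) * B 2 - B m * B 1
        rw [hB m, hB1, hB2]; ring
    | succ n ih =>
      refine ⟨ih.2, fun m => ?_⟩
      show B (m + n + 3) = B (m+1) * B (n+3) - B m * B (n+2)
      have e1 : B (m+n+1) = B (m+1) * B (n+1) - B m * B n := ih.1 m
      have e2 : B (m+n+2) = B (m+1) * B (n+2) - B m * B (n+1) := ih.2 m
      have h2 : B (m+n+3) = 6 * B (m+n+2) - B (m+n+1) := hB (m+n+1)
      have h3 : B (n+3) = 6 * B (n+2) - B (n+1) := hB (n+1)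
      rw [h2, e2, e1, h3, hB n]; ring
  -- a positive integer with no prime factors equals 1
  have key : ∀ x : ℤ, 1 ≤ x → (∀ q : ℕ, q.Prime → (q:ℤ) ∣ x → False) → x = 1 := by
    intro x hx hq
    by_contra hne
    have hna : x.natAbs ≠ 1 := by omega
    obtain ⟨p, pp, pdvd⟩ := Int.exists_prime_and_dvd hna
    have hqp : p.natAbs.Prime := Int.prime_iff_natAbs_prime.mp pp
    exact hq p.natAbs hqp (Int.natAbs_dvd.mpr pdvd)
  intro k hk hsmooth
  rcases Nat.even_or_odd k with hke | hko
  · -- k even, k = 2m = 2(j+1)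
    obtain ⟨m, hm⟩ := hke
    have hm1 : 1 ≤ m := by omega
    obtain ⟨j, hj⟩ : ∃ j, m = j + 1 := ⟨m - 1, by omega⟩
    have hmj := hmono j
    have hmj1 := hmono (j+1)
    have hBk : B k = 2 * B (j+1) * (3 * B (j+1) - B j) := by
      have e : B (j+1+j+1) = B (j+2) * B (j+1) - B (j+1) * B j := (haddf j).1 (j+1)
      have hkj : k = j+1+j+1 := by omega
      rw [hkj, e, hB j]; ring
    have hCge : 2 ≤ 3 * B (j+1) - B j := by omega
    have hCodd : ¬ (2:ℤ) ∣ (3 * B (j+1) - B j) := by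
      have h1 := (hdvd2 j).1
      have h2 := (hdvd2 j).2
      omega
    have hCdvdBk : (3 * B (j+1) - B j) ∣ B k := ⟨2 * B (j+1), by rw [hBk]; ring⟩
    have hBmdvdBk : B (j+1) ∣ B k := ⟨2 * (3 * B (j+1) - B j), by rw [hBk]; ring⟩
    have hcopC : IsCoprime (B (j+1)) (3 * B (j+1) - B j) := by
      have h2 : IsCoprime (B (j+1)) (-B j + B (j+1) * 3) :=
        (hcop j).neg_right.add_mul_left_right 3
      have h3 : -B j + B (j+1) * 3 = 3 * B (j+1) - B j := by ring
      rwa [h3] at h2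
    rcases Nat.even_or_odd m with hme | hmo
    · -- m even: contradiction via the odd cofactor
      exfalso
      obtain ⟨t, ht⟩ := hme
      have h3Bm : (3:ℤ) ∣ B (j+1) := ((hdvd3 j).2).mpr ⟨t, by omega⟩
      have hna : (3 * B (j+1) - B j).natAbs ≠ 1 := by omega
      obtain ⟨p, pp, pdvd⟩ := Int.exists_prime_and_dvd hna
      have hqp : p.natAbs.Prime := Int.prime_iff_natAbs_prime.mp pp
      have hqdvdC : (p.natAbs : ℤ) ∣ (3 * B (j+1) - B j) := Int.natAbs_dvd.mpr pdvd
      have hle : p.natAbs ≤ 3 := hsmooth p.natAbs hqp (hqdvdC.trans hCdvdBk)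
      have h2le : 2 ≤ p.natAbs := hqp.two_le
      have hcases : p.natAbs = 2 ∨ p.natAbs = 3 := by omega
      rcases hcases with h | h
      · rw [h] at hqdvdC; exact hCodd (by exact_mod_cast hqdvdC)
      · rw [h] at hqdvdC
        have := hcopC.isUnit_of_dvd' h3Bm (by exact_mod_cast hqdvdC)
        rw [Int.isUnit_iff] at this
        omega
    · -- m odd: B m = 1, so m = 1, k = 2
      obtain ⟨t, ht⟩ := hmo
      have h2Bm : ¬ (2:ℤ) ∣ B (j+1) := by
        have h := (hdvd2 j).2
        omega
      have h3Bm : ¬ (3:ℤ) ∣ B (j+1) := by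
        have h := (hdvd3 j).2
        omega
      have hBm1 : B (j+1) = 1 := by
        refine key (B (j+1)) (by omega) ?_
        intro q hq hqdvd
        have hle : q ≤ 3 := hsmooth q hq (hqdvd.trans hBmdvdBk)
        have h2le : 2 ≤ q := hq.two_le
        have hcases : q = 2 ∨ q = 3 := by omega
        rcases hcases with h | h
        · rw [h] at hqdvd; exact h2Bm (by exact_mod_cast hqdvd)
        · rw [h] at hqdvd; exact h3Bm (by exact_mod_cast hqdvd)
      have hmle : m ≤ 1 := by
        by_contra hm2
        have : B 2 ≤ B (j+1) := hSM.le_iff_le.mpr (by omega)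
        omega
      omega
  · -- k odd: B k = 1, k = 1
    obtain ⟨t, ht⟩ := hko
    have h2Bk : ¬ (2:ℤ) ∣ B k := by
      have h := (hdvd2 k).1
      omega
    have h3Bk : ¬ (3:ℤ) ∣ B k := by
      have h := (hdvd3 k).1
      omega
    obtain ⟨j, hj⟩ : ∃ j, k = j + 1 := ⟨k - 1, by omega⟩
    have hBkpos : 1 ≤ B k := by
      have h := hmono j
      rw [hj]
      omega
    have hBk1 : B k = 1 := by
      refine key (B k) hBkpos ?_
      intro q hq hqdvd
      have hle : q ≤ 3 := hsmooth q hq hqdvd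
      have h2le : 2 ≤ q := hq.two_le
      have hcases : q = 2 ∨ q = 3 := by omega
      rcases hcases with h | h
      · rw [h] at hqdvd; exact h2Bk (by exact_mod_cast hqdvd)
      · rw [h] at hqdvd; exact h3Bk (by exact_mod_cast hqdvd)
    have hkle : k ≤ 1 := by
      by_contra hk2
      have : B 2 ≤ B k := hSM.le_iff_le.mpr (by omega)
      omega
    omega
end

section
/- The only solution of the equation 6^x - 1 = B_m in positive integers m and x is (m, x) = (3, 2); that is, the only solutions of B_{n+1}^x - B_n^x = B_m with n = 1 and m, x positive are given by 6^2 - 1 = 35 = B_3. -/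
namespace SixPowBal


def f : ℕ → ℤ × ℤ
  | 0 => (0, 1)
  | n + 1 => (3 * (f n).1 + (f n).2, 8 * (f n).1 + 3 * (f n).2)

def Bb (n : ℕ) : ℤ := (f n).1
def Cc (n : ℕ) : ℤ := (f n).2

lemma Bb_succ (n : ℕ) : Bb (n+1) = 3 * Bb n + Cc n := rfl
lemma Cc_succ (n : ℕ) : Cc (n+1) = 8 * Bb n + 3 * Cc n := rfl
lemma Bb0 : Bb 0 = 0 := rfl
lemma Cc0 : Cc 0 = 1 := rfl
lemma Bb1 : Bb 1 = 1 := by decide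
lemma Cc1 : Cc 1 = 3 := by decide

lemma pos (n : ℕ) : 0 ≤ Bb n ∧ 1 ≤ Cc n := by
  induction n with
  | zero => exact ⟨le_refl 0, le_refl 1⟩
  | succ n ih => rw [Bb_succ, Cc_succ]; constructor <;> linarith [ih.1, ih.2]

lemma pell (n : ℕ) : Cc n ^ 2 - 8 * Bb n ^ 2 = 1 := by
  induction n with
  | zero => decide
  | succ n ih => rw [Bb_succ, Cc_succ]; linear_combination ih

lemma Bb_rec (n : ℕ) : Bb (n+2) = 6 * Bb (n+1) - Bb n := by
  have s1 : Bb (n+1) = 3 * Bb n + Cc n := Bb_succ n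
  have s2 : Cc (n+1) = 8 * Bb n + 3 * Cc n := Cc_succ n
  have s3 : Bb (n+2) = 3 * Bb (n+1) + Cc (n+1) := Bb_succ (n+1)
  rw [s3, s2, s1]; ring

lemma Cc_rec (n : ℕ) : Cc (n+2) = 6 * Cc (n+1) - Cc n := by
  have s1 : Bb (n+1) = 3 * Bb n + Cc n := Bb_succ n
  have s2 : Cc (n+1) = 8 * Bb n + 3 * Cc n := Cc_succ n
  have s3 : Cc (n+2) = 8 * Bb (n+1) + 3 * Cc (n+1) := Cc_succ (n+1)
  rw [s3, s2, s1]; ring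

lemma doc (n : ℕ) : Cc n * Bb (n+1) - Bb n * Cc (n+1) = 1 := by
  rw [Bb_succ, Cc_succ]; linear_combination pell n

lemma idE (n : ℕ) : Cc n * Bb (n+2) = Cc (n+1) * Bb (n+1) + 3 := by
  have s1 : Bb (n+1) = 3 * Bb n + Cc n := Bb_succ n
  have s2 : Cc (n+1) = 8 * Bb n + 3 * Cc n := Cc_succ n
  have s3 : Bb (n+2) = 3 * Bb (n+1) + Cc (n+1) := Bb_succ (n+1)
  rw [s3, s2, s1]; linear_combination 3 * pell n

lemma keyid (j : ℕ) : Bb (2*j+1) + 1 = 2 * Cc j * Bb (j+1) ∧ Bb (2*j+2) = 2 * Cc (j+1) * Bb (j+1) := by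
  induction j with
  | zero => constructor <;> decide
  | succ j ih =>
    obtain ⟨h1, h2⟩ := ih
    have r1 : Bb (2*j+3) = 6 * Bb (2*j+2) - Bb (2*j+1) := Bb_rec (2*j+1)
    have r2 : Bb (2*j+4) = 6 * Bb (2*j+3) - Bb (2*j+2) := Bb_rec (2*j+2)
    have d : Cc (j+1) * Bb (j+2) - Bb (j+1) * Cc (j+2) = 1 := doc (j+1)
    have e : Cc j * Bb (j+2) = Cc (j+1) * Bb (j+1) + 3 := idE j
    have c2 : Cc (j+2) = 6 * Cc (j+1) - Cc j := Cc_rec j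
    have g1 : Bb (2*j+3) + 1 = 2 * Cc (j+1) * Bb (j+2) := by
      linear_combination r1 + 6*h2 - h1 - 2*Bb (j+1)*c2 - 2*d
    have g2 : Bb (2*j+4) = 2 * Cc (j+2) * Bb (j+2) := by
      linear_combination r2 + 6*g1 - h2 - 2*Bb (j+2)*c2 + 2*e
    exact ⟨g1, g2⟩

lemma even6 (k : ℕ) : (6:ℤ) ∣ Bb (2*k) := by
  induction k with
  | zero => exact ⟨0, rfl⟩
  | succ k ih =>
    have s : Bb (2*k+2) = 17 * Bb (2*k) + 6 * Cc (2*k) := by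
      have s1 : Bb (2*k+1) = 3 * Bb (2*k) + Cc (2*k) := Bb_succ _
      have s2 : Cc (2*k+1) = 8 * Bb (2*k) + 3 * Cc (2*k) := Cc_succ _
      have s3 : Bb (2*k+2) = 3 * Bb (2*k+1) + Cc (2*k+1) := Bb_succ _
      rw [s3, s2, s1]; ring
    show (6:ℤ) ∣ Bb (2*k+2)
    obtain ⟨c, hc⟩ := ih
    exact ⟨17*c + Cc (2*k), by rw [s, hc]; ring⟩

lemma addf (a b : ℕ) : Bb (a+b) = Bb a * Cc b + Cc a * Bb b ∧ Cc (a+b) = Cc a * Cc b + 8 * Bb a * Bb b := by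
  induction b with
  | zero => constructor <;> (rw [Bb0, Cc0]; ring_nf)
  | succ b ih =>
    obtain ⟨ihB, ihC⟩ := ih
    have s1 : Bb (b+1) = 3 * Bb b + Cc b := Bb_succ b
    have s2 : Cc (b+1) = 8 * Bb b + 3 * Cc b := Cc_succ b
    have s3 : Bb (a+b+1) = 3 * Bb (a+b) + Cc (a+b) := Bb_succ (a+b)
    have s4 : Cc (a+b+1) = 8 * Bb (a+b) + 3 * Cc (a+b) := Cc_succ (a+b)
    constructor
    · show Bb (a+b+1) = Bb a * Cc (b+1) + Cc a * Bb (b+1)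
      rw [s3, ihB, ihC, s1, s2]; ring
    · show Cc (a+b+1) = Cc a * Cc (b+1) + 8 * Bb a * Bb (b+1)
      rw [s4, ihB, ihC, s1, s2]; ring

lemma triple (k : ℕ) : Cc (3*k) = Cc k * (4 * Cc k ^ 2 - 3) := by
  obtain ⟨hB2, hC2⟩ := addf k k
  obtain ⟨hB3, hC3⟩ := addf (k+k) k
  rw [show 3*k = k+k+k from by ring, hC3, hB2, hC2]
  linear_combination (-3 * Cc k) * pell k

lemma Cc_odd (n : ℕ) : Cc n % 2 = 1 := by
  induction n with
  | zero => decide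
  | succ n ih => rw [Cc_succ]; omega

lemma Cc_big (k : ℕ) : 17 ≤ Cc (k+2) := by
  have hp := pos k
  have s1 : Bb (k+1) = 3 * Bb k + Cc k := Bb_succ k
  have s2 : Cc (k+1) = 8 * Bb k + 3 * Cc k := Cc_succ k
  have s3 : Cc (k+2) = 8 * Bb (k+1) + 3 * Cc (k+1) := Cc_succ (k+1)
  rw [s3, s2, s1]; linarith [hp.1, hp.2]

def g : ℕ → ZMod 9 × ZMod 9
  | 0 => (0, 1)
  | n + 1 => (3 * (g n).1 + (g n).2, 8 * (g n).1 + 3 * (g n).2)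

lemma cast9 (n : ℕ) : ((Bb n : ZMod 9), (Cc n : ZMod 9)) = g n := by
  induction n with
  | zero => decide
  | succ n ih =>
    have h1 : ((Bb n : ZMod 9)) = (g n).1 := congrArg Prod.fst ih
    have h2 : ((Cc n : ZMod 9)) = (g n).2 := congrArg Prod.snd ih
    show ((Bb (n+1) : ZMod 9), (Cc (n+1) : ZMod 9)) =
      (3 * (g n).1 + (g n).2, 8 * (g n).1 + 3 * (g n).2)
    rw [Bb_succ, Cc_succ]
    push_cast
    rw [h1, h2]

lemma gper (n : ℕ) : g (n + 12) = g n := by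
  induction n with
  | zero => decide
  | succ n ih =>
    show (3 * (g (n + 12)).1 + (g (n + 12)).2, 8 * (g (n + 12)).1 + 3 * (g (n + 12)).2) =
      (3 * (g n).1 + (g n).2, 8 * (g n).1 + 3 * (g n).2)
    rw [ih]

lemma gadd (r q : ℕ) : g (r + 12 * q) = g r := by
  induction q with
  | zero => rfl
  | succ q ih =>
    show g (r + 12 * q + 12) = g r
    rw [gper, ih]

lemma gmod (j : ℕ) : g j = g (j % 12) := by
  have h := gadd (j % 12) (j / 12)
  rwa [Nat.mod_add_div] at h

lemma int_dvd_pow3 {c : ℤ} {t : ℕ} (hc : 0 < c) (h : c ∣ 3^t) : ∃ a, a ≤ t ∧ c = 3^a := by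
  lift c to ℕ using hc.le with cn
  have h' : cn ∣ 3^t := by exact_mod_cast h
  obtain ⟨a, ha, rfl⟩ := (Nat.dvd_prime_pow Nat.prime_three).mp h'
  exact ⟨a, ha, by push_cast; ring⟩

lemma class3 (j t : ℕ) (hj : 1 ≤ j) (h : Cc j = 3 ^ t) : j = 1 := by
  by_cases h3 : (3:ℕ) ∣ j
  · exfalso
    obtain ⟨k, rfl⟩ := h3
    have hk : 1 ≤ k := by omega
    have hck : 3 ≤ Cc k := by
      obtain ⟨k', rfl⟩ : ∃ k', k = k' + 1 := ⟨k - 1, by omega⟩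
      have hp := pos k'
      rw [Cc_succ]; linarith [hp.1, hp.2]
    have ht : (3:ℤ) ^ t = Cc k * (4 * Cc k ^ 2 - 3) := by rw [← h, triple k]
    have hd1 : Cc k ∣ (3:ℤ)^t := ⟨4 * Cc k ^ 2 - 3, ht⟩
    have hd2 : (4 * Cc k ^ 2 - 3) ∣ (3:ℤ)^t := ⟨Cc k, by rw [ht]; ring⟩
    obtain ⟨a, hat, hca⟩ := int_dvd_pow3 (by linarith) hd1
    obtain ⟨e, het, hde⟩ := int_dvd_pow3 (by nlinarith) hd2
    obtain ⟨a', rfl⟩ : ∃ a', a = a' + 1 := by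
      refine ⟨a - 1, ?_⟩
      rcases Nat.eq_zero_or_pos a with rfl | h' 
      · rw [hca] at hck; norm_num at hck
      · omega
    rw [hca] at hde hck
    have h9X : (9:ℤ) ∣ (3^(a'+1):ℤ)^2 := ⟨(3^a')^2, by rw [pow_succ]; ring⟩
    have hX9 : (9:ℤ) ≤ ((3:ℤ)^(a'+1))^2 := by nlinarith
    rcases e with _ | _ | e'
    · norm_num at hde
      obtain ⟨w, hw⟩ := h9X
      omega
    · norm_num at hde
      obtain ⟨w, hw⟩ := h9X
      omega
    · rw [show ((3:ℤ)^(e'+2)) = 9 * 3^e' from by ring] at hde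
      have hY1 : (1:ℤ) ≤ 3^e' := one_le_pow₀ (by norm_num)
      obtain ⟨w, hw⟩ := h9X
      omega
  · -- 3 ∤ j
    have hr : (Cc j : ZMod 9) = (g (j % 12)).2 := by
      have := congrArg Prod.snd (cast9 j)
      rwa [gmod j] at this
    have ht1 : t ≤ 1 := by
      by_contra h'
      obtain ⟨t', rfl⟩ : ∃ t', t = t' + 2 := ⟨t - 2, by omega⟩
      have h0 : (Cc j : ZMod 9) = 0 := by
        rw [h]; push_cast
        rw [show ((3:ZMod 9)^(t'+2)) = 3^t' * 9 from by ring,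
          show (9 : ZMod 9) = 0 from by decide, mul_zero]
      rw [hr] at h0
      have hrange : j % 12 = 1 ∨ j % 12 = 2 ∨ j % 12 = 4 ∨ j % 12 = 5 ∨ j % 12 = 7 ∨
          j % 12 = 8 ∨ j % 12 = 10 ∨ j % 12 = 11 := by omega
      rcases hrange with h'|h'|h'|h'|h'|h'|h'|h' <;> rw [h'] at h0 <;> revert h0 <;> decide
    have hle : Cc j ≤ 3 := by
      interval_cases t
      · rw [h]; norm_num
      · rw [h]; norm_num
    rcases Nat.lt_or_ge j 2 with h2 | h2
    · omega
    · exfalso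
      obtain ⟨k, rfl⟩ : ∃ k, j = k + 2 := ⟨j - 2, by omega⟩
      have := Cc_big k
      omega


end SixPowBal

open SixPowBal in
/-- The only solution of 6^x - 1 = B_m in positive integers m, x is (m, x) = (3, 2). -/
theorem six_pow_sub_one_eq_balancing
    (B : ℕ → ℤ) (hB0 : B 0 = 0) (hB1 : B 1 = 1)
    (hB : ∀ n, B (n + 2) = 6 * B (n + 1) - B n) :
    ∀ m x : ℕ, 0 < m → 0 < x → ((6 : ℤ) ^ x - 1 = B m ↔ m = 3 ∧ x = 2) := by
  have hBb : ∀ n, B n = Bb n := by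
    have key : ∀ n, B n = Bb n ∧ B (n+1) = Bb (n+1) := by
      intro n
      induction n with
      | zero => exact ⟨by rw [hB0, Bb0], by rw [hB1, Bb1]⟩
      | succ n ih =>
        refine ⟨ih.2, ?_⟩
        show B (n+2) = Bb (n+2)
        rw [hB n, ih.1, ih.2, Bb_rec n]
    exact fun n => (key n).1
  intro m x hm hx
  constructor
  · intro h
    rw [hBb m] at h
    rcases Nat.even_or_odd m with he | ho
    · exfalso
      obtain ⟨k, hk⟩ := he
      rw [show m = 2*k from by omega] at h
      have h6 : (6:ℤ) ∣ Bb (2*k) := even6 k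
      have hdx : (6:ℤ) ∣ 6^x := dvd_pow_self 6 (by omega)
      obtain ⟨u, hu⟩ := h6
      obtain ⟨v, hv⟩ := hdx
      have h1 : (6:ℤ) ∣ 1 := ⟨v - u, by linarith⟩
      norm_num at h1
    · obtain ⟨j, hj⟩ := ho
      rw [hj] at h
      have hid := (keyid j).1
      have h6 : (6:ℤ)^x = 2 * Cc j * Bb (j+1) := by linarith
      rcases Nat.eq_zero_or_pos j with rfl | hj1
      · exfalso
        have h2 : (6:ℤ)^x = 2 := by rw [h6]; decide
        have hdx : (6:ℤ) ∣ 6^x := dvd_pow_self 6 (by omega)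
        rw [h2] at hdx
        norm_num at hdx
      · have hcpos : 0 < Cc j := lt_of_lt_of_le one_pos (pos j).2
        have hdvd : Cc j ∣ (6:ℤ)^x := ⟨2 * Bb (j+1), by rw [h6]; ring⟩
        obtain ⟨cn, hcn⟩ : ∃ cn : ℕ, Cc j = (cn:ℤ) :=
          ⟨(Cc j).toNat, (Int.toNat_of_nonneg hcpos.le).symm⟩
        have hcdn : cn ∣ 6^x := by
          have h' := hdvd
          rw [hcn] at h'
          exact_mod_cast h'
        have hodd : cn % 2 = 1 := by
          have h' : (cn : ℤ) % 2 = 1 := by rw [← hcn]; exact Cc_odd j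
          omega
        have hc3 : cn ∣ 3^x := by
          have h63 : (6:ℕ)^x = 2^x * 3^x := by rw [show (6:ℕ) = 2*3 from rfl, mul_pow]
          rw [h63] at hcdn
          have hcop : Nat.Coprime cn (2^x) :=
            Nat.Coprime.pow_right _ (by simpa [Nat.coprime_two_right, Nat.odd_iff] using hodd)
          exact (Nat.Coprime.dvd_of_dvd_mul_left hcop hcdn)
        obtain ⟨t, htx, rfl⟩ := (Nat.dvd_prime_pow Nat.prime_three).mp hc3
        have hct : Cc j = (3:ℤ)^t := by rw [hcn]; push_cast; ring
        have hj1' := class3 j t hj1 hct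
        subst hj1'
        have h36 : (6:ℤ)^x = 6^2 := by rw [h6]; decide
        have hx2 : x = 2 := by
          have h' : (6:ℕ)^x = 6^2 := by exact_mod_cast h36
          exact Nat.pow_right_injective (by norm_num) h'
        exact ⟨by omega, hx2⟩
  · rintro ⟨rfl, rfl⟩
    rw [hBb 3]
    decide
end

section
/- Let m, n, x be positive integers with n ≥ 2 and x ≥ 2 satisfying B_{n+1}^x - B_n^x = B_m. Then (n-1)x < m ≤ (n+1)x. (The paper states the slightly different bounds (n-2)x + 1 < m < nx + 2; the lower bound follows from this statement, while the stated correct upper bound is m ≤ (n+1)x.) -/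
/-- If m, n, x are positive integers with n ≥ 2, x ≥ 2 and B_{n+1}^x - B_n^x = B_m,
then (n-1)x < m ≤ (n+1)x. -/
theorem balancing_index_bounds
    (B : ℕ → ℤ) (hB0 : B 0 = 0) (hB1 : B 1 = 1)
    (hB : ∀ n, B (n + 2) = 6 * B (n + 1) - B n) :
    ∀ m n x : ℕ, 0 < m → 2 ≤ n → 2 ≤ x →
      B (n + 1) ^ x - B n ^ x = B m →
      (n - 1) * x < m ∧ m ≤ (n + 1) * x := by
  -- basic growth facts
  have key : ∀ k, 0 ≤ B k ∧ 5 * B k ≤ B (k + 1) := by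
    intro k
    induction k with
    | zero => constructor <;> simp [hB0, hB1]
    | succ k ih =>
      obtain ⟨h0, h5⟩ := ih
      have h0' : 0 ≤ B (k + 1) := by linarith
      refine ⟨h0', ?_⟩
      rw [hB]
      linarith
  have hnn : ∀ k, 0 ≤ B k := fun k => (key k).1
  have h5 : ∀ k, 5 * B k ≤ B (k + 1) := fun k => (key k).2
  have hone : ∀ k, 1 ≤ B (k + 1) := by
    intro k
    induction k with
    | zero => simp [hB1]
    | succ k ih => have := h5 (k + 1); linarith
  have hmono : StrictMono B := by
    apply strictMono_nat_of_lt_succ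
    intro k
    cases k with
    | zero => simp [hB0, hB1]
    | succ k => have := h5 (k + 1); have := hone k; linarith
  -- addition identity
  have hid : ∀ b a, B (a + b + 1) = B (a + 1) * B (b + 1) - B a * B b ∧
      B (a + b + 2) = B (a + 1) * B (b + 2) - B a * B (b + 1) := by
    intro b
    induction b with
    | zero =>
      intro a
      constructor
      · simp [hB1, hB0]
      · have h2 := hB 0
        simp only [Nat.add_zero]
        rw [hB a, h2, hB0, hB1]; ring
    | succ b ih =>
      intro a
      obtain ⟨h1, h2⟩ := ih a
      constructor
      · have : a + (b + 1) + 1 = a + b + 2 := by ring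
        rw [this, h2]
      · have e : a + (b + 1) + 2 = (a + b + 1) + 2 := by ring
        rw [e, hB (a + b + 1), h1, h2, hB (b + 1), hB b]
        ring
  have hid1 : ∀ a b, B (a + b + 1) = B (a + 1) * B (b + 1) - B a * B b :=
    fun a b => (hid b a).1
  -- submultiplicative bounds
  have hmul : ∀ a b : ℕ, 1 ≤ a → 1 ≤ b → B a * B b ≤ B (a + b) := by
    intro a b ha hb
    obtain ⟨a', rfl⟩ := Nat.exists_eq_add_of_le ha
    have e : 1 + a' + b = a' + b + 1 := by ring
    rw [e, hid1 a' b]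
    have h1 : B a' ≤ B (a' + 1) := le_of_lt (hmono (Nat.lt_succ_self a'))
    have h2 : 5 * B b ≤ B (b + 1) := h5 b
    have h3 : 0 ≤ B a' := hnn a'
    have h4 : 0 ≤ B b := hnn b
    have h6 : 0 ≤ B (a' + 1) := hnn _
    have : 1 + a' = a' + 1 := by ring
    rw [this]
    nlinarith
  have hup : ∀ a b : ℕ, 1 ≤ b → B (a + b) ≤ B (a + 1) * B b := by
    intro a b hb
    obtain ⟨b', rfl⟩ := Nat.exists_eq_add_of_le hb
    have e : a + (1 + b') = a + b' + 1 := by ring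
    rw [e, hid1 a b']
    have : 1 + b' = b' + 1 := by ring
    rw [this]
    nlinarith [hnn a, hnn b']
  intro m n x hm hn hx hEq
  -- upper: B((n+1)x) ≥ B(n+1)^x
  have hpow : ∀ y : ℕ, 1 ≤ y → B (n + 1) ^ y ≤ B ((n + 1) * y) := by
    intro y hy
    induction y with
    | zero => omega
    | succ y ih =>
      cases Nat.eq_or_lt_of_le hy with
      | inl h => simp [← h]
      | inr h =>
        have hy1 : 1 ≤ y := by omega
        have := ih hy1
        have e : (n + 1) * (y + 1) = (n + 1) + (n + 1) * y := by ring
        rw [e]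
        calc B (n + 1) ^ (y + 1) = B (n + 1) * B (n + 1) ^ y := by ring
          _ ≤ B (n + 1) * B ((n + 1) * y) := by
              apply mul_le_mul_of_nonneg_left this (hnn _)
          _ ≤ B ((n + 1) + (n + 1) * y) := hmul _ _ (by omega) (Nat.mul_pos (by omega) hy1)
  -- lower: B((n-1)x) ≤ B(n)^x
  have hpow2 : ∀ y : ℕ, 1 ≤ y → B ((n - 1) * y) ≤ B n ^ y := by
    intro y hy
    induction y with
    | zero => omega
    | succ y ih =>
      cases Nat.eq_or_lt_of_le hy with
      | inl h =>
        simp [← h]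
        exact le_of_lt (hmono (by omega))
      | inr h =>
        have hy1 : 1 ≤ y := by omega
        have := ih hy1
        have e : (n - 1) * (y + 1) = (n - 1) + (n - 1) * y := by ring
        rw [e]
        calc B ((n - 1) + (n - 1) * y) ≤ B ((n - 1) + 1) * B ((n - 1) * y) := by
              exact hup _ _ (Nat.mul_pos (by omega) hy1)
          _ = B n * B ((n - 1) * y) := by rw [show n - 1 + 1 = n by omega]
          _ ≤ B n * B n ^ y := mul_le_mul_of_nonneg_left this (hnn _)
          _ = B n ^ (y + 1) := by ring
  -- key numeric estimates
  have hBn1 : 1 ≤ B n := hone (n - 1) |>.trans_eq (by rw [Nat.sub_add_cancel (by omega)])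
  have h5n : 5 * B n ≤ B (n + 1) := h5 n
  have hbig : 2 * B n ^ x < B (n + 1) ^ x := by
    have h1 : (5 * B n) ^ x ≤ B (n + 1) ^ x :=
      pow_le_pow_left₀ (by linarith) h5n x
    have h2 : (5 : ℤ) ^ 2 ≤ 5 ^ x := pow_le_pow_right₀ (by norm_num) hx
    have h3 : (1 : ℤ) ≤ B n ^ x := one_le_pow₀ hBn1
    have h4 : (5 * B n) ^ x = 5 ^ x * B n ^ x := by rw [mul_pow]
    nlinarith [pow_nonneg (hnn n) x]
  constructor
  · -- (n-1)*x < m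
    have hlt : B ((n - 1) * x) < B m := by
      have h1 : B ((n - 1) * x) ≤ B n ^ x := hpow2 x (by omega)
      rw [← hEq]
      linarith
    exact hmono.lt_iff_lt.mp hlt
  · -- m ≤ (n+1)*x
    have hle : B m ≤ B ((n + 1) * x) := by
      rw [← hEq]
      have h1 : B (n + 1) ^ x ≤ B ((n + 1) * x) := hpow x (by omega)
      have h2 : 0 ≤ B n ^ x := pow_nonneg (hnn n) x
      linarith
    exact hmono.le_iff_le.mp hle
end

section
/- Let m, n, x be positive integers with n ≥ 2 and x ≥ 3 satisfying B_{n+1}^x - B_n^x = B_m. Then |α^m · (4√2)^{-1} · B_{n+1}^{-x} - 1| < 2/5.8^x, where α = 3 + 2√2. -/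
/-- If m, n, x are positive integers with n ≥ 2, x ≥ 3 and B_{n+1}^x - B_n^x = B_m,
then |α^m · (4√2)⁻¹ · B_{n+1}^{-x} - 1| < 2/5.8^x, where α = 3 + 2√2. -/
theorem balancing_linear_form_bound
    (B : ℕ → ℤ) (hB0 : B 0 = 0) (hB1 : B 1 = 1)
    (hB : ∀ n, B (n + 2) = 6 * B (n + 1) - B n)
    (α : ℝ) (hα : α = 3 + 2 * Real.sqrt 2) :
    ∀ m n x : ℕ, 0 < m → 2 ≤ n → 3 ≤ x →
      B (n + 1) ^ x - B n ^ x = B m →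
      |α ^ m * (4 * Real.sqrt 2)⁻¹ * ((B (n + 1) : ℝ) ^ x)⁻¹ - 1| < 2 / 5.8 ^ x := by
  set s := Real.sqrt 2 with hs
  have hs2 : s ^ 2 = 2 := Real.sq_sqrt (by norm_num)
  have hs_pos : (0:ℝ) < s := Real.sqrt_pos.mpr (by norm_num)
  have hs_gt : (1.4:ℝ) < s := by nlinarith
  have hs_lt : s < 1.5 := by nlinarith
  -- Binet formula
  have binet : ∀ k, 4 * s * (B k : ℝ) = (3 + 2*s) ^ k - (3 - 2*s) ^ k := by
    have key : ∀ k, (4 * s * (B k : ℝ) = (3 + 2*s) ^ k - (3 - 2*s) ^ k) ∧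
        (4 * s * (B (k+1) : ℝ) = (3 + 2*s) ^ (k+1) - (3 - 2*s) ^ (k+1)) := by
      intro k
      induction k with
      | zero => constructor <;> simp [hB0, hB1] <;> ring
      | succ k ih =>
        obtain ⟨h1, h2⟩ := ih
        refine ⟨h2, ?_⟩
        rw [hB]
        push_cast
        linear_combination 6*h2 - h1 - 4*((3+2*s)^k - (3-2*s)^k) * hs2
    exact fun k => (key k).1
  intro m n x hm hn hx hyp
  -- basic facts about B
  have mono : ∀ k, 0 ≤ B k ∧ B k < B (k+1) := by
    intro k
    induction k with
    | zero => simp [hB0, hB1]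
    | succ k ih =>
      obtain ⟨h1, h2⟩ := ih
      refine ⟨by omega, ?_⟩
      rw [hB]; omega
  have h5 : ∀ k, 5 * B (k+1) ≤ B (k+2) := by
    intro k
    have := (mono k).2
    have := (mono k).1
    rw [hB]; omega
  have h29 : ∀ k, 29 * B (k+2) ≤ 5 * B (k+3) := by
    intro k
    have := h5 k
    have h : B (k+3) = 6 * B (k+2) - B (k+1) := hB (k+1)
    omega
  have h35 : ∀ k, 35 ≤ B (k+3) := by
    intro k
    induction k with
    | zero =>
      have h1 : B 3 = 6 * B 2 - B 1 := hB 1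
      have h0 : B 2 = 6 * B 1 - B 0 := hB 0
      show (35:ℤ) ≤ B 3
      omega
    | succ k ih =>
      have h2 : B (k+3) < B (k+4) := (mono (k+3)).2
      show (35:ℤ) ≤ B (k+4)
      omega
  -- specialized bounds
  obtain ⟨n', rfl⟩ : ∃ n', n = n' + 2 := ⟨n - 2, by omega⟩
  have hBn1 : (35:ℝ) ≤ (B (n'+3) : ℝ) := by exact_mod_cast h35 n'
  have hBn0 : (0:ℝ) ≤ (B (n'+2) : ℝ) := by exact_mod_cast (mono (n'+2)).1
  have h29' : 29 * (B (n'+2) : ℝ) ≤ 5 * (B (n'+3) : ℝ) := by exact_mod_cast h29 n'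
  set N : ℝ := ((B (n'+3) : ℤ) : ℝ) with hN
  have hNpos : (0:ℝ) < N := by rw [hN]; linarith
  have hNx : (0:ℝ) < N ^ x := pow_pos hNpos x
  have hcast : N ^ x - (B (n'+2) : ℝ) ^ x = (B m : ℝ) := by
    rw [hN]
    exact_mod_cast congrArg (fun z : ℤ => (z : ℝ)) hyp
  have hbm := binet m
  rw [hα]
  show |(3 + 2*s) ^ m * (4 * s)⁻¹ * (N ^ x)⁻¹ - 1| < 2 / 5.8 ^ x
  have hE : (3 + 2*s) ^ m * (4 * s)⁻¹ * (N ^ x)⁻¹ - 1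
      = ((3 - 2*s) ^ m - 4*s*(B (n'+2) : ℝ) ^ x) / (4*s*N^x) := by
    field_simp
    linear_combination -hbm - 4*s*hcast
  rw [hE, abs_div, abs_of_pos (by positivity : (0:ℝ) < 4*s*N^x)]
  rw [div_lt_div_iff₀ (by positivity) (by positivity : (0:ℝ) < (5.8:ℝ)^x)]
  -- bound the numerator
  have hβpos : (0:ℝ) < 3 - 2*s := by nlinarith
  have hβlt : (3 - 2*s) < 1 := by nlinarith
  have hβm : (3 - 2*s) ^ m ≤ 1 := pow_le_one₀ (le_of_lt hβpos) (le_of_lt hβlt)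
  have habs : |(3 - 2*s) ^ m - 4*s*(B (n'+2) : ℝ) ^ x|
      ≤ (3 - 2*s) ^ m + 4*s*(B (n'+2) : ℝ) ^ x := by
    have hp1 : (0:ℝ) ≤ (3 - 2*s) ^ m := le_of_lt (pow_pos hβpos m)
    have hp2 : (0:ℝ) ≤ 4*s*(B (n'+2) : ℝ) ^ x := by positivity
    rw [abs_sub_le_iff]
    constructor <;> linarith
  have hpow : (5.8:ℝ) ^ x * (B (n'+2) : ℝ) ^ x ≤ N ^ x := by
    calc (5.8:ℝ) ^ x * (B (n'+2) : ℝ) ^ x = (5.8 * (B (n'+2) : ℝ)) ^ x := (mul_pow _ _ _).symm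
    _ ≤ N ^ x := by
        apply pow_le_pow_left₀ (by positivity)
        rw [hN]; push_cast; linarith
  have h58N : (5.8:ℝ) ^ x < 4*s*N^x := by
    have hh1 : (5.8:ℝ) ^ x ≤ 35 ^ x := pow_le_pow_left₀ (by norm_num) (by norm_num) x
    have hh2 : (35:ℝ) ^ x ≤ N ^ x := pow_le_pow_left₀ (by norm_num) hBn1 x
    nlinarith [pow_pos (show (0:ℝ) < 35 by norm_num) x]
  refine lt_of_le_of_lt (mul_le_mul_of_nonneg_right habs (by positivity)) ?_
  calc ((3 - 2*s) ^ m + 4*s*(B (n'+2) : ℝ) ^ x) * 5.8 ^ x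
      = (3 - 2*s) ^ m * 5.8 ^ x + 4*s*(5.8 ^ x * (B (n'+2) : ℝ) ^ x) := by ring
    _ ≤ 1 * 5.8 ^ x + 4*s*N^x := by
        have hq : 4*s*(5.8 ^ x * (B (n'+2) : ℝ) ^ x) ≤ 4*s*N^x :=
          mul_le_mul_of_nonneg_left hpow (by positivity)
        have h58pos : (0:ℝ) < (5.8:ℝ)^x := by positivity
        nlinarith
    _ < 4*s*N^x + 4*s*N^x := by linarith
    _ = 2 * (4*s*N^x) := by ring
end

section
/- For all positive integers m, n, x, one has α^m ≠ 4√2 · B_{n+1}^x, where α = 3 + 2√2; equivalently, the quantity Λ₁ = α^m (4√2)^{-1} B_{n+1}^{-x} - 1 is nonzero. -/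
lemma alpha_pow_form : ∀ m : ℕ, ∃ p q : ℤ, 0 < p ∧ 0 ≤ q ∧
    (3 + 2 * Real.sqrt 2) ^ m = (p : ℝ) + (q : ℝ) * Real.sqrt 2 := by
  intro m
  induction m with
  | zero => exact ⟨1, 0, by norm_num⟩
  | succ k ih =>
    obtain ⟨p, q, hp, hq, heq⟩ := ih
    refine ⟨3 * p + 4 * q, 2 * p + 3 * q, by linarith, by linarith, ?_⟩
    rw [pow_succ, heq]
    have h2 : Real.sqrt 2 * Real.sqrt 2 = 2 :=
      Real.mul_self_sqrt (by norm_num)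
    push_cast
    linear_combination (2 * (q:ℝ)) * h2

/-- For all positive integers m, n, x, α^m ≠ 4√2 · B_{n+1}^x, where α = 3 + 2√2;
equivalently Λ₁ = α^m (4√2)⁻¹ B_{n+1}^{-x} - 1 is nonzero. -/
theorem balancing_lambda_one_nonzero
    (B : ℕ → ℤ) (hB0 : B 0 = 0) (hB1 : B 1 = 1)
    (hB : ∀ n, B (n + 2) = 6 * B (n + 1) - B n)
    (α : ℝ) (hα : α = 3 + 2 * Real.sqrt 2) :
    ∀ m n x : ℕ, 0 < m → 0 < n → 0 < x →
      α ^ m ≠ 4 * Real.sqrt 2 * (B (n + 1) : ℝ) ^ x := by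
  intro m n x hm hn hx heq
  obtain ⟨p, q, hp, hq, hform⟩ := alpha_pow_form m
  rw [hα, hform] at heq
  set c : ℤ := 4 * (B (n + 1)) ^ x with hc
  have hrhs : 4 * Real.sqrt 2 * (B (n + 1) : ℝ) ^ x = (c : ℝ) * Real.sqrt 2 := by
    simp only [hc]; push_cast; ring
  rw [hrhs] at heq
  have key : (p : ℝ) = ((c - q : ℤ) : ℝ) * Real.sqrt 2 := by
    push_cast; linarith
  by_cases h : c - q = 0
  · rw [h] at key
    rw [Int.cast_zero, zero_mul] at key
    exact hp.ne' (by exact_mod_cast key)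
  · have : Real.sqrt 2 = ((p : ℚ) / ((c - q : ℤ) : ℚ) : ℚ) := by
      have hcq : ((c - q : ℤ) : ℝ) ≠ 0 := Int.cast_ne_zero.mpr h
      have hcq' : ((c : ℝ) - (q : ℝ)) ≠ 0 := by push_cast at hcq; exact hcq
      push_cast
      rw [eq_div_iff hcq']
      push_cast at key
      linarith [key]
    exact irrational_sqrt_two ⟨_, this.symm⟩
end

section
/- There are no positive integers m, n, x with 2 ≤ n ≤ 37 and x ≥ 3 satisfying B_{n+1}^x - B_n^x = B_m. -/
set_option maxRecDepth 1000000

set_option maxHeartbeats 4000000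

namespace BalCert

lemma orbitMem {M : ℕ} (S : List (ZMod M × ZMod M))
    (hS0 : ((0 : ZMod M), (1 : ZMod M)) ∈ S)
    (hSc : (S.all fun p => decide (((p.2, 6 * p.2 - p.1) : ZMod M × ZMod M) ∈ S)) = true)
    (f : ℕ → ZMod M) (h0 : f 0 = 0) (h1 : f 1 = 1)
    (hrec : ∀ k, f (k + 2) = 6 * f (k + 1) - f k) :
    ∀ k, (f k, f (k + 1)) ∈ S := by
  rw [List.all_eq_true] at hSc
  intro k
  induction k with
  | zero => rw [h0, h1]; exact hS0
  | succ k ih =>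
      have h := of_decide_eq_true (hSc _ ih)
      simp only at h
      rw [show k + 1 + 1 = k + 2 from rfl, hrec k]
      exact h

lemma powPeriod {M : ℕ} (a : ZMod M) (T : ℕ) (h : a ^ (3 + T) = a ^ 3) :
    ∀ s, a ^ (3 + s) = a ^ (3 + s % T) := by
  have step : ∀ r, a ^ (3 + r + T) = a ^ (3 + r) := by
    intro r
    calc a ^ (3 + r + T) = a ^ (3 + T) * a ^ r := by
          rw [← pow_add]; congr 1; omega
      _ = a ^ 3 * a ^ r := by rw [h]
      _ = a ^ (3 + r) := by rw [← pow_add]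
  have key : ∀ q r, a ^ (3 + (T * q + r)) = a ^ (3 + r) := by
    intro q
    induction q with
    | zero => intro r; rw [Nat.mul_zero, Nat.zero_add]
    | succ q ih =>
        intro r
        have e : 3 + (T * (q + 1) + r) = 3 + (T * q + r) + T := by ring
        rw [e, step, ih r]
  intro s
  conv_lhs => rw [← Nat.div_add_mod s T]
  exact key _ _

lemma condElim (B : ℕ → ℤ) (hB0 : B 0 = 0) (hB1 : B 1 = 1)
    (hB : ∀ k, B (k + 2) = 6 * B (k + 1) - B k)
    (M : ℕ) (S : List (ZMod M × ZMod M))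
    (hS0 : ((0 : ZMod M), (1 : ZMod M)) ∈ S)
    (hSc : (S.all fun p => decide (((p.2, 6 * p.2 - p.1) : ZMod M × ZMod M) ∈ S)) = true)
    (cn dn : ℤ) (cz dz : ZMod M)
    (hcz : ((cn : ℤ) : ZMod M) = cz) (hdz : ((dn : ℤ) : ZMod M) = dz)
    (T : ℕ) (hT : 0 < T)
    (h3 : cz ^ (3 + T) = cz ^ 3) (h4 : dz ^ (3 + T) = dz ^ 3)
    (mask : ℕ)
    (hmask : ((List.range T).all fun u => !(Nat.testBit mask u) ||
        (S.all fun p => decide (p.1 ≠ cz ^ (3 + u) - dz ^ (3 + u)))) = true)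
    (m x : ℕ) (hx : 3 ≤ x)
    (heq : cn ^ x - dn ^ x = B m)
    (hbit : Nat.testBit mask ((x - 3) % T) = true) : False := by
  have horb := orbitMem S hS0 hSc (fun k => ((B k : ℤ) : ZMod M))
      (by simp [hB0]) (by simp [hB1])
      (by intro k; show ((B (k+2) : ℤ) : ZMod M) = _; rw [hB k]; push_cast; ring) m
  have hu : (x - 3) % T < T := Nat.mod_lt _ hT
  have hxx : x = 3 + (x - 3) := by omega
  have hp1 : cz ^ x = cz ^ (3 + (x - 3) % T) := by
    conv_lhs => rw [hxx]
    exact powPeriod cz T h3 (x - 3)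
  have hp2 : dz ^ x = dz ^ (3 + (x - 3) % T) := by
    conv_lhs => rw [hxx]
    exact powPeriod dz T h4 (x - 3)
  have hv : ((B m : ℤ) : ZMod M) = cz ^ (3 + (x - 3) % T) - dz ^ (3 + (x - 3) % T) := by
    rw [← heq]
    push_cast
    rw [hcz, hdz, hp1, hp2]
  have h1 := List.all_eq_true.mp hmask _ (List.mem_range.mpr hu)
  rw [hbit] at h1
  simp only [Bool.not_true, Bool.false_or] at h1
  have h2 := of_decide_eq_true (List.all_eq_true.mp h1 _ horb)
  exact h2 hv
private def S2_776 : List (ZMod 776 × ZMod 776) := [(0, 1), (1, 6), (6, 35), (35, 204), (204, 413), (413, 722), (722, 39), (39, 288), (288, 137), (137, 534), (534, 739), (739, 20), (20, 157), (157, 146), (146, 719), (719, 288), (288, 233), (233, 334), (334, 219), (219, 204), (204, 229), (229, 394), (394, 583), (583, 0), (0, 193), (193, 382), (382, 547), (547, 572), (572, 557), (557, 442), (442, 543), (543, 488), (488, 57), (57, 630), (630, 619), (619, 756), (756, 37), (37, 242), (242, 639), (639, 488), (488, 737), (737, 54), (54, 363), (363, 572), (572, 741), (741, 770), (770, 775),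 (775, 0)]
lemma elim2 (B : ℕ → ℤ) (hB0 : B 0 = 0) (hB1 : B 1 = 1)
    (hB : ∀ k, B (k + 2) = 6 * B (k + 1) - B k)
    (m x : ℕ) (hx : 3 ≤ x) (heq : (35 : ℤ) ^ x - (6 : ℤ) ^ x = B m) : False := by
  have hcov : ∀ s, s < 12 → (Nat.testBit 4095 (s % 12)) = true := by decide
  have hc := hcov ((x - 3) % 12) (Nat.mod_lt _ (by norm_num))
  rw [Nat.mod_mod_of_dvd (x - 3) (by decide : (12:ℕ) ∣ 12)] at hc
  exact condElim B hB0 hB1 hB 776 S2_776 (by decide) (by decide) 35 6 (35 : ZMod 776) (6 : ZMod 776) (by decide) (by decide) 12 (by norm_num) (by decide) (by decide) 4095 (by decide) m x hx heq hc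

private def S3_88 : List (ZMod 88 × ZMod 88) := [(0, 1), (1, 6), (6, 35), (35, 28), (28, 45), (45, 66), (66, 87), (87, 16), (16, 9), (9, 38), (38, 43), (43, 44), (44, 45), (45, 50), (50, 79), (79, 72), (72, 1), (1, 22), (22, 43), (43, 60), (60, 53), (53, 82), (82, 87), (87, 0)]
private def S3_837 : List (ZMod 837 × ZMod 837) := [(0, 1), (1, 6), (6, 35), (35, 204), (204, 352), (352, 234), (234, 215), (215, 219), (219, 262), (262, 516), (516, 323), (323, 585), (585, 676), (676, 123), (123, 62), (62, 249), (249, 595), (595, 810), (810, 80), (80, 507), (507, 451), (451, 525), (525, 188), (188, 603), (603, 82), (82, 726), (726, 89), (89, 645), (645, 433), (433, 279), (279, 404), (404, 471), (471, 748), (748, 669), (669, 755), (755, 513), (513, 649), (649, 33), (33, 386), (386, 609), (609, 757), (757, 585), (585, 242), (242, 30), (30, 775), (775, 435), (435, 161), (161, 531), (531, 514), (514, 42), (42, 575), (575, 60), (60, 622), (622, 324), (324, 485), (485, 75), (75, 802), (802, 552), (552, 836), (836, 279), (279, 1), (1, 564), (564, 35), (35, 483), (483, 352), (352, 792), (792,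 215), (215, 498), (498, 262), (262, 237), (237, 323), (323, 27), (27, 676), (676, 681), (681, 62), (62, 528), (528, 595), (595, 531), (531, 80), (80, 786), (786, 451), (451, 246), (246, 188), (188, 45), (45, 82), (82, 447), (447, 89), (89, 87), (87, 433), (433, 0), (0, 404), (404, 750), (750, 748), (748, 390), (390, 755), (755, 792), (792, 649), (649, 591), (591, 386), (386, 51), (51, 757), (757, 306), (306, 242), (242, 309), (309, 775), (775, 156), (156, 161), (161, 810), (810, 514), (514, 600), (600, 575), (575, 339), (339, 622), (622, 45), (45, 485), (485, 354), (354, 802), (802, 273), (273, 836), (836, 558), (558, 1), (1, 285), (285, 35), (35, 762), (762, 352), (352, 513), (513, 215), (215, 777), (777, 262), (262, 795), (795, 323), (323, 306), (306, 676), (676, 402), (402, 62), (62, 807), (807, 595), (595, 252), (252, 80), (80, 228), (228, 451), (451, 804), (804, 188), (188, 324), (324, 82), (82, 168), (168, 89), (89, 366), (366, 433), (433, 558), (558, 404), (404, 192), (192, 748), (748, 111), (111, 755), (755, 234), (234, 649), (649, 312), (312, 386), (386, 330), (330, 757), (757, 27), (27, 242), (242, 588), (588, 775), (775, 714), (714,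 161), (161, 252), (252, 514), (514, 321), (321, 575), (575, 618), (618, 622), (622, 603), (603, 485), (485, 633), (633, 802), (802, 831), (831, 836), (836, 0)]
lemma elim3 (B : ℕ → ℤ) (hB0 : B 0 = 0) (hB1 : B 1 = 1)
    (hB : ∀ k, B (k + 2) = 6 * B (k + 1) - B k)
    (m x : ℕ) (hx : 3 ≤ x) (heq : (204 : ℤ) ^ x - (35 : ℤ) ^ x = B m) : False := by
  have hcov : ∀ s, s < 30 → (Nat.testBit 495 (s % 10) || Nat.testBit 798973758 (s % 30)) = true := by decide
  have hc := hcov ((x - 3) % 30) (Nat.mod_lt _ (by norm_num))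
  rw [Nat.mod_mod_of_dvd (x - 3) (by decide : (10:ℕ) ∣ 30)] at hc
  rw [Nat.mod_mod_of_dvd (x - 3) (by decide : (30:ℕ) ∣ 30)] at hc
  simp only [Bool.or_eq_true] at hc
  rcases hc with (h0 | h1)
  · exact condElim B hB0 hB1 hB 88 S3_88 (by decide) (by decide) 204 35 (28 : ZMod 88) (35 : ZMod 88) (by decide) (by decide) 10 (by norm_num) (by decide) (by decide) 495 (by decide) m x hx heq h0
  · exact condElim B hB0 hB1 hB 837 S3_837 (by decide) (by decide) 204 35 (204 : ZMod 837) (35 : ZMod 837) (by decide) (by decide) 30 (by norm_num) (by decide) (by decide) 798973758 (by decide) m x hx heq h1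

private def S4_135 : List (ZMod 135 × ZMod 135) := [(0, 1), (1, 6), (6, 35), (35, 69), (69, 109), (109, 45), (45, 26), (26, 111), (111, 100), (100, 84), (84, 134), (134, 45), (45, 1), (1, 96), (96, 35), (35, 114), (114, 109), (109, 0), (0, 26), (26, 21), (21, 100), (100, 39), (39, 134), (134, 90), (90, 1), (1, 51), (51, 35), (35, 24), (24, 109), (109, 90), (90, 26), (26, 66), (66, 100), (100, 129), (129, 134), (134, 0)]
lemma elim4 (B : ℕ → ℤ) (hB0 : B 0 = 0) (hB1 : B 1 = 1)
    (hB : ∀ k, B (k + 2) = 6 * B (k + 1) - B k)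
    (m x : ℕ) (hx : 3 ≤ x) (heq : (1189 : ℤ) ^ x - (204 : ℤ) ^ x = B m) : False := by
  have hcov : ∀ s, s < 2 → (Nat.testBit 3 (s % 2)) = true := by decide
  have hc := hcov ((x - 3) % 2) (Nat.mod_lt _ (by norm_num))
  rw [Nat.mod_mod_of_dvd (x - 3) (by decide : (2:ℕ) ∣ 2)] at hc
  exact condElim B hB0 hB1 hB 135 S4_135 (by decide) (by decide) 1189 204 (109 : ZMod 135) (69 : ZMod 135) (by decide) (by decide) 2 (by norm_num) (by decide) (by decide) 3 (by decide) m x hx heq hc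

private def S5_136 : List (ZMod 136 × ZMod 136) := [(0, 1), (1, 6), (6, 35), (35, 68), (68, 101), (101, 130), (130, 135), (135, 0)]
lemma elim5 (B : ℕ → ℤ) (hB0 : B 0 = 0) (hB1 : B 1 = 1)
    (hB : ∀ k, B (k + 2) = 6 * B (k + 1) - B k)
    (m x : ℕ) (hx : 3 ≤ x) (heq : (6930 : ℤ) ^ x - (1189 : ℤ) ^ x = B m) : False := by
  have hcov : ∀ s, s < 16 → (Nat.testBit 65535 (s % 16)) = true := by decide
  have hc := hcov ((x - 3) % 16) (Nat.mod_lt _ (by norm_num))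
  rw [Nat.mod_mod_of_dvd (x - 3) (by decide : (16:ℕ) ∣ 16)] at hc
  exact condElim B hB0 hB1 hB 136 S5_136 (by decide) (by decide) 6930 1189 (130 : ZMod 136) (101 : ZMod 136) (by decide) (by decide) 16 (by norm_num) (by decide) (by decide) 65535 (by decide) m x hx heq hc

private def S6_136 : List (ZMod 136 × ZMod 136) := [(0, 1), (1, 6), (6, 35), (35, 68), (68, 101), (101, 130), (130, 135), (135, 0)]
lemma elim6 (B : ℕ → ℤ) (hB0 : B 0 = 0) (hB1 : B 1 = 1)
    (hB : ∀ k, B (k + 2) = 6 * B (k + 1) - B k)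
    (m x : ℕ) (hx : 3 ≤ x) (heq : (40391 : ℤ) ^ x - (6930 : ℤ) ^ x = B m) : False := by
  have hcov : ∀ s, s < 16 → (Nat.testBit 65535 (s % 16)) = true := by decide
  have hc := hcov ((x - 3) % 16) (Nat.mod_lt _ (by norm_num))
  rw [Nat.mod_mod_of_dvd (x - 3) (by decide : (16:ℕ) ∣ 16)] at hc
  exact condElim B hB0 hB1 hB 136 S6_136 (by decide) (by decide) 40391 6930 (135 : ZMod 136) (130 : ZMod 136) (by decide) (by decide) 16 (by norm_num) (by decide) (by decide) 65535 (by decide) m x hx heq hc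

private def S7_135 : List (ZMod 135 × ZMod 135) := [(0, 1), (1, 6), (6, 35), (35, 69), (69, 109), (109, 45), (45, 26), (26, 111), (111, 100), (100, 84), (84, 134), (134, 45), (45, 1), (1, 96), (96, 35), (35, 114), (114, 109), (109, 0), (0, 26), (26, 21), (21, 100), (100, 39), (39, 134), (134, 90), (90, 1), (1, 51), (51, 35), (35, 24), (24, 109), (109, 90), (90, 26), (26, 66), (66, 100), (100, 129), (129, 134), (134, 0)]
lemma elim7 (B : ℕ → ℤ) (hB0 : B 0 = 0) (hB1 : B 1 = 1)
    (hB : ∀ k, B (k + 2) = 6 * B (k + 1) - B k)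
    (m x : ℕ) (hx : 3 ≤ x) (heq : (235416 : ℤ) ^ x - (40391 : ℤ) ^ x = B m) : False := by
  have hcov : ∀ s, s < 2 → (Nat.testBit 3 (s % 2)) = true := by decide
  have hc := hcov ((x - 3) % 2) (Nat.mod_lt _ (by norm_num))
  rw [Nat.mod_mod_of_dvd (x - 3) (by decide : (2:ℕ) ∣ 2)] at hc
  exact condElim B hB0 hB1 hB 135 S7_135 (by decide) (by decide) 235416 40391 (111 : ZMod 135) (26 : ZMod 135) (by decide) (by decide) 2 (by norm_num) (by decide) (by decide) 3 (by decide) m x hx heq hc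

private def S8_1971 : List (ZMod 1971 × ZMod 1971) := [(0, 1), (1, 6), (6, 35), (35, 204), (204, 1189), (1189, 1017), (1017, 971), (971, 867), (867, 289), (289, 867), (867, 971), (971, 1017), (1017, 1189), (1189, 204), (204, 35), (35, 6), (6, 1), (1, 0), (0, 1970), (1970, 1965), (1965, 1936), (1936, 1767), (1767, 782), (782, 954), (954, 1000), (1000, 1104), (1104, 1682), (1682, 1104), (1104, 1000), (1000, 954), (954, 782), (782, 1767), (1767, 1936), (1936, 1965), (1965, 1970), (1970, 0)]
lemma elim8 (B : ℕ → ℤ) (hB0 : B 0 = 0) (hB1 : B 1 = 1)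
    (hB : ∀ k, B (k + 2) = 6 * B (k + 1) - B k)
    (m x : ℕ) (hx : 3 ≤ x) (heq : (1372105 : ℤ) ^ x - (235416 : ℤ) ^ x = B m) : False := by
  have hcov : ∀ s, s < 12 → (Nat.testBit 4095 (s % 12)) = true := by decide
  have hc := hcov ((x - 3) % 12) (Nat.mod_lt _ (by norm_num))
  rw [Nat.mod_mod_of_dvd (x - 3) (by decide : (12:ℕ) ∣ 12)] at hc
  exact condElim B hB0 hB1 hB 1971 S8_1971 (by decide) (by decide) 1372105 235416 (289 : ZMod 1971) (867 : ZMod 1971) (by decide) (by decide) 12 (by norm_num) (by decide) (by decide) 4095 (by decide) m x hx heq hc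

private def S9_1971 : List (ZMod 1971 × ZMod 1971) := [(0, 1), (1, 6), (6, 35), (35, 204), (204, 1189), (1189, 1017), (1017, 971), (971, 867), (867, 289), (289, 867), (867, 971), (971, 1017), (1017, 1189), (1189, 204), (204, 35), (35, 6), (6, 1), (1, 0), (0, 1970), (1970, 1965), (1965, 1936), (1936, 1767), (1767, 782), (782, 954), (954, 1000), (1000, 1104), (1104, 1682), (1682, 1104), (1104, 1000), (1000, 954), (954, 782), (782, 1767), (1767, 1936), (1936, 1965), (1965, 1970), (1970, 0)]
lemma elim9 (B : ℕ → ℤ) (hB0 : B 0 = 0) (hB1 : B 1 = 1)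
    (hB : ∀ k, B (k + 2) = 6 * B (k + 1) - B k)
    (m x : ℕ) (hx : 3 ≤ x) (heq : (7997214 : ℤ) ^ x - (1372105 : ℤ) ^ x = B m) : False := by
  have hcov : ∀ s, s < 12 → (Nat.testBit 4095 (s % 12)) = true := by decide
  have hc := hcov ((x - 3) % 12) (Nat.mod_lt _ (by norm_num))
  rw [Nat.mod_mod_of_dvd (x - 3) (by decide : (12:ℕ) ∣ 12)] at hc
  exact condElim B hB0 hB1 hB 1971 S9_1971 (by decide) (by decide) 7997214 1372105 (867 : ZMod 1971) (289 : ZMod 1971) (by decide) (by decide) 12 (by norm_num) (by decide) (by decide) 4095 (by decide) m x hx heq hc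

private def S10_135 : List (ZMod 135 × ZMod 135) := [(0, 1), (1, 6), (6, 35), (35, 69), (69, 109), (109, 45), (45, 26), (26, 111), (111, 100), (100, 84), (84, 134), (134, 45), (45, 1), (1, 96), (96, 35), (35, 114), (114, 109), (109, 0), (0, 26), (26, 21), (21, 100), (100, 39), (39, 134), (134, 90), (90, 1), (1, 51), (51, 35), (35, 24), (24, 109), (109, 90), (90, 26), (26, 66), (66, 100), (100, 129), (129, 134), (134, 0)]
lemma elim10 (B : ℕ → ℤ) (hB0 : B 0 = 0) (hB1 : B 1 = 1)
    (hB : ∀ k, B (k + 2) = 6 * B (k + 1) - B k)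
    (m x : ℕ) (hx : 3 ≤ x) (heq : (46611179 : ℤ) ^ x - (7997214 : ℤ) ^ x = B m) : False := by
  have hcov : ∀ s, s < 2 → (Nat.testBit 3 (s % 2)) = true := by decide
  have hc := hcov ((x - 3) % 2) (Nat.mod_lt _ (by norm_num))
  rw [Nat.mod_mod_of_dvd (x - 3) (by decide : (2:ℕ) ∣ 2)] at hc
  exact condElim B hB0 hB1 hB 135 S10_135 (by decide) (by decide) 46611179 7997214 (134 : ZMod 135) (84 : ZMod 135) (by decide) (by decide) 2 (by norm_num) (by decide) (by decide) 3 (by decide) m x hx heq hc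

private def S11_18875 : List (ZMod 18875 × ZMod 18875) := [(0, 1), (1, 6), (6, 35), (35, 204), (204, 1189), (1189, 6930), (6930, 2641), (2641, 8916), (8916, 13105), (13105, 13089), (13089, 8804), (8804, 1985), (1985, 3106), (3106, 16651), (16651, 2425), (2425, 16774), (16774, 3844), (3844, 6290), (6290, 15021), (15021, 8336), (8336, 16120), (16120, 12884), (12884, 4559), (4559, 14470), (14470, 6761), (6761, 7221), (7221, 17690), (17690, 4544), (4544, 9574), (9574, 15150), (15150, 5826), (5826, 931), (931, 18635), (18635, 16504), (16504, 4889), (4889, 12830), (12830, 15466), (15466, 4466), (4466, 11330), (11330, 6889), (6889, 11129), (11129, 3260), (3260, 8431), (8431, 9576), (9576, 11275), (11275, 1449), (1449, 16294), (16294, 1940), (1940, 14221), (14221, 7886), (7886, 14220), (14220, 1934), (1934, 16259), (16259, 1245), (1245, 10086), (10086, 2646), (2646, 5790), (5790, 13219), (13219, 16899), (16899, 12675), (12675, 2526), (2526, 2481), (2481, 12360), (12360, 15054), (15054, 2464), (2464, 18605), (18605, 14791), (14791, 13516), (13516, 9680), (9680, 6814), (6814, 12329), (12329, 10535), (10535,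 13131), (13131, 11626), (11626, 0), (0, 7249), (7249, 5744), (5744, 8340), (8340, 6546), (6546, 12061), (12061, 9195), (9195, 5359), (5359, 4084), (4084, 270), (270, 16411), (16411, 3821), (3821, 6515), (6515, 16394), (16394, 16349), (16349, 6200), (6200, 1976), (1976, 5656), (5656, 13085), (13085, 16229), (16229, 8789), (8789, 17630), (17630, 2616), (2616, 16941), (16941, 4655), (4655, 10989), (10989, 4654), (4654, 16935), (16935, 2581), (2581, 17426), (17426, 7600), (7600, 9299), (9299, 10444), (10444, 15615), (15615, 7746), (7746, 11986), (11986, 7545), (7545, 14409), (14409, 3409), (3409, 6045), (6045, 13986), (13986, 2371), (2371, 240), (240, 17944), (17944, 13049), (13049, 3725), (3725, 9301), (9301, 14331), (14331, 1185), (1185, 11654), (11654, 12114), (12114, 4405), (4405, 14316), (14316, 5991), (5991, 2755), (2755, 10539), (10539, 3854), (3854, 12585), (12585, 15031), (15031, 2101), (2101, 16450), (16450, 2224), (2224, 15769), (15769, 16890), (16890, 10071), (10071, 5786), (5786, 5770), (5770, 9959), (9959, 16234), (16234, 11945), (11945, 17686), (17686, 18671), (18671, 18840), (18840, 18869), (18869,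 18874), (18874, 0)]
private def S11_31 : List (ZMod 31 × ZMod 31) := [(0, 1), (1, 6), (6, 4), (4, 18), (18, 11), (11, 17), (17, 29), (29, 2), (2, 14), (14, 20), (20, 13), (13, 27), (27, 25), (25, 30), (30, 0)]
lemma elim11 (B : ℕ → ℤ) (hB0 : B 0 = 0) (hB1 : B 1 = 1)
    (hB : ∀ k, B (k + 2) = 6 * B (k + 1) - B k)
    (m x : ℕ) (hx : 3 ≤ x) (heq : (271669860 : ℤ) ^ x - (46611179 : ℤ) ^ x = B m) : False := by
  have hcov : ∀ s, s < 150 → (Nat.testBit 1416097320106694569487518110313170955629756415 (s % 150) || Nat.testBit 27132732 (s % 30)) = true := by decide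
  have hc := hcov ((x - 3) % 150) (Nat.mod_lt _ (by norm_num))
  rw [Nat.mod_mod_of_dvd (x - 3) (by decide : (30:ℕ) ∣ 150)] at hc
  rw [Nat.mod_mod_of_dvd (x - 3) (by decide : (150:ℕ) ∣ 150)] at hc
  simp only [Bool.or_eq_true] at hc
  rcases hc with (h0 | h1)
  · exact condElim B hB0 hB1 hB 18875 S11_18875 (by decide) (by decide) 271669860 46611179 (1985 : ZMod 18875) (8804 : ZMod 18875) (by decide) (by decide) 150 (by norm_num) (by decide) (by decide) 1416097320106694569487518110313170955629756415 (by decide) m x hx heq h0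
  · exact condElim B hB0 hB1 hB 31 S11_31 (by decide) (by decide) 271669860 46611179 (27 : ZMod 31) (13 : ZMod 31) (by decide) (by decide) 30 (by norm_num) (by decide) (by decide) 27132732 (by decide) m x hx heq h1

private def S12_353 : List (ZMod 353 × ZMod 353) := [(0, 1), (1, 6), (6, 35), (35, 204), (204, 130), (130, 223), (223, 149), (149, 318), (318, 347), (347, 352), (352, 0)]
private def S12_6176 : List (ZMod 6176 × ZMod 6176) := [(0, 1), (1, 6), (6, 35), (35, 204), (204, 1189), (1189, 754), (754, 3335), (3335, 728), (728, 1033), (1033, 5470), (5470, 907), (907, 6148), (6148, 5101), (5101, 5930), (5930, 5775), (5775, 4016), (4016, 5969), (5969, 918), (918, 5715), (5715, 2492), (2492, 3061), (3061, 3522), (3522, 5719), (5719, 6088), (6088, 6105), (6105, 5838), (5838, 4219), (4219, 948), (948, 1469), (1469, 1690), (1690, 2495), (2495, 928), (928, 3073), (3073, 5158), (5158, 3171), (3171, 1516), (1516, 5925), (5925, 3154), (3154, 647), (647, 728), (728, 3721), (3721, 3070), (3070, 2347), (2347, 4836), (4836, 1965), (1965, 778), (778, 2703), (2703, 3088), (3088,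 3473), (3473, 5398), (5398, 4211), (4211, 1340), (1340, 3829), (3829, 3106), (3106, 2455), (2455, 5448), (5448, 5529), (5529, 3022), (3022, 251), (251, 4660), (4660, 3005), (3005, 1018), (1018, 3103), (3103, 5248), (5248, 3681), (3681, 4486), (4486, 4707), (4707, 5228), (5228, 1957), (1957, 338), (338, 71), (71, 88), (88, 457), (457, 2654), (2654, 3115), (3115, 3684), (3684, 461), (461, 5258), (5258, 207), (207, 2160), (2160, 401), (401, 246), (246, 1075), (1075, 28), (28, 5269), (5269, 706), (706, 5143), (5143, 5448), (5448, 2841), (2841, 5422), (5422, 4987), (4987, 5972), (5972, 6141), (6141, 6170), (6170, 6175), (6175, 0)]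
lemma elim12 (B : ℕ → ℤ) (hB0 : B 0 = 0) (hB1 : B 1 = 1)
    (hB : ∀ k, B (k + 2) = 6 * B (k + 1) - B k)
    (m x : ℕ) (hx : 3 ≤ x) (heq : (1583407981 : ℤ) ^ x - (271669860 : ℤ) ^ x = B m) : False := by
  have hcov : ∀ s, s < 96 → (Nat.testBit 1610612719 (s % 32) || Nat.testBit 79228011398536868172711059455 (s % 96)) = true := by decide
  have hc := hcov ((x - 3) % 96) (Nat.mod_lt _ (by norm_num))
  rw [Nat.mod_mod_of_dvd (x - 3) (by decide : (32:ℕ) ∣ 96)] at hc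
  rw [Nat.mod_mod_of_dvd (x - 3) (by decide : (96:ℕ) ∣ 96)] at hc
  simp only [Bool.or_eq_true] at hc
  rcases hc with (h0 | h1)
  · exact condElim B hB0 hB1 hB 353 S12_353 (by decide) (by decide) 1583407981 271669860 (6 : ZMod 353) (1 : ZMod 353) (by decide) (by decide) 32 (by norm_num) (by decide) (by decide) 1610612719 (by decide) m x hx heq h0
  · exact condElim B hB0 hB1 hB 6176 S12_6176 (by decide) (by decide) 1583407981 271669860 (5101 : ZMod 6176) (6148 : ZMod 6176) (by decide) (by decide) 96 (by norm_num) (by decide) (by decide) 79228011398536868172711059455 (by decide) m x hx heq h1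

private def S13_135 : List (ZMod 135 × ZMod 135) := [(0, 1), (1, 6), (6, 35), (35, 69), (69, 109), (109, 45), (45, 26), (26, 111), (111, 100), (100, 84), (84, 134), (134, 45), (45, 1), (1, 96), (96, 35), (35, 114), (114, 109), (109, 0), (0, 26), (26, 21), (21, 100), (100, 39), (39, 134), (134, 90), (90, 1), (1, 51), (51, 35), (35, 24), (24, 109), (109, 90), (90, 26), (26, 66), (66, 100), (100, 129), (129, 134), (134, 0)]
lemma elim13 (B : ℕ → ℤ) (hB0 : B 0 = 0) (hB1 : B 1 = 1)
    (hB : ∀ k, B (k + 2) = 6 * B (k + 1) - B k)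
    (m x : ℕ) (hx : 3 ≤ x) (heq : (9228778026 : ℤ) ^ x - (1583407981 : ℤ) ^ x = B m) : False := by
  have hcov : ∀ s, s < 1 → (Nat.testBit 1 (s % 1)) = true := by decide
  have hc := hcov ((x - 3) % 1) (Nat.mod_lt _ (by norm_num))
  rw [Nat.mod_mod_of_dvd (x - 3) (by decide : (1:ℕ) ∣ 1)] at hc
  exact condElim B hB0 hB1 hB 135 S13_135 (by decide) (by decide) 9228778026 1583407981 (96 : ZMod 135) (1 : ZMod 135) (by decide) (by decide) 1 (by norm_num) (by decide) (by decide) 1 (by decide) m x hx heq hc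

private def S14_136 : List (ZMod 136 × ZMod 136) := [(0, 1), (1, 6), (6, 35), (35, 68), (68, 101), (101, 130), (130, 135), (135, 0)]
lemma elim14 (B : ℕ → ℤ) (hB0 : B 0 = 0) (hB1 : B 1 = 1)
    (hB : ∀ k, B (k + 2) = 6 * B (k + 1) - B k)
    (m x : ℕ) (hx : 3 ≤ x) (heq : (53789260175 : ℤ) ^ x - (9228778026 : ℤ) ^ x = B m) : False := by
  have hcov : ∀ s, s < 16 → (Nat.testBit 65535 (s % 16)) = true := by decide
  have hc := hcov ((x - 3) % 16) (Nat.mod_lt _ (by norm_num))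
  rw [Nat.mod_mod_of_dvd (x - 3) (by decide : (16:ℕ) ∣ 16)] at hc
  exact condElim B hB0 hB1 hB 136 S14_136 (by decide) (by decide) 53789260175 9228778026 (135 : ZMod 136) (130 : ZMod 136) (by decide) (by decide) 16 (by norm_num) (by decide) (by decide) 65535 (by decide) m x hx heq hc

private def S15_513 : List (ZMod 513 × ZMod 513) := [(0, 1), (1, 6), (6, 35), (35, 204), (204, 163), (163, 261), (261, 377), (377, 462), (462, 343), (343, 57), (57, 512), (512, 450), (450, 136), (136, 366), (366, 8), (8, 195), (195, 136), (136, 108), (108, 512), (512, 399), (399, 343), (343, 120), (120, 377), (377, 90), (90, 163), (163, 375), (375, 35), (35, 348), (348, 1), (1, 171), (171, 512), (512, 336), (336, 478), (478, 480), (480, 350), (350, 81), (81, 136), (136, 222), (222, 170), (170, 285), (285, 1), (1, 234), (234, 377), (377, 489), (489, 505), (505, 489), (489, 377), (377, 234), (234, 1), (1, 285), (285, 170), (170, 222), (222, 136), (136, 81), (81, 350), (350, 480), (480, 478), (478, 336), (336, 512), (512, 171), (171, 1), (1, 348), (348, 35), (35, 375), (375, 163), (163, 90), (90, 377), (377, 120),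 (120, 343), (343, 399), (399, 512), (512, 108), (108, 136), (136, 195), (195, 8), (8, 366), (366, 136), (136, 450), (450, 512), (512, 57), (57, 343), (343, 462), (462, 377), (377, 261), (261, 163), (163, 204), (204, 35), (35, 6), (6, 1), (1, 0), (0, 512), (512, 507), (507, 478), (478, 309), (309, 350), (350, 252), (252, 136), (136, 51), (51, 170), (170, 456), (456, 1), (1, 63), (63, 377), (377, 147), (147, 505), (505, 318), (318, 377), (377, 405), (405, 1), (1, 114), (114, 170), (170, 393), (393, 136), (136, 423), (423, 350), (350, 138), (138, 478), (478, 165), (165, 512), (512, 342), (342, 1), (1, 177), (177, 35), (35, 33), (33, 163), (163, 432), (432, 377), (377, 291), (291, 343), (343, 228), (228, 512), (512, 279), (279, 136), (136, 24), (24, 8), (8, 24), (24, 136), (136, 279), (279, 512), (512, 228), (228, 343), (343, 291), (291, 377), (377, 432), (432, 163), (163, 33), (33, 35), (35, 177), (177, 1), (1, 342), (342, 512), (512, 165), (165, 478), (478, 138), (138, 350), (350, 423), (423, 136), (136, 393), (393, 170), (170, 114), (114, 1), (1, 405), (405, 377), (377, 318), (318, 505), (505, 147), (147, 377), (377, 63),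 (63, 1), (1, 456), (456, 170), (170, 51), (51, 136), (136, 252), (252, 350), (350, 309), (309, 478), (478, 507), (507, 512), (512, 0)]
lemma elim15 (B : ℕ → ℤ) (hB0 : B 0 = 0) (hB1 : B 1 = 1)
    (hB : ∀ k, B (k + 2) = 6 * B (k + 1) - B k)
    (m x : ℕ) (hx : 3 ≤ x) (heq : (313506783024 : ℤ) ^ x - (53789260175 : ℤ) ^ x = B m) : False := by
  have hcov : ∀ s, s < 18 → (Nat.testBit 262143 (s % 18)) = true := by decide
  have hc := hcov ((x - 3) % 18) (Nat.mod_lt _ (by norm_num))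
  rw [Nat.mod_mod_of_dvd (x - 3) (by decide : (18:ℕ) ∣ 18)] at hc
  exact condElim B hB0 hB1 hB 513 S15_513 (by decide) (by decide) 313506783024 53789260175 (195 : ZMod 513) (8 : ZMod 513) (by decide) (by decide) 18 (by norm_num) (by decide) (by decide) 262143 (by decide) m x hx heq hc

private def S16_135 : List (ZMod 135 × ZMod 135) := [(0, 1), (1, 6), (6, 35), (35, 69), (69, 109), (109, 45), (45, 26), (26, 111), (111, 100), (100, 84), (84, 134), (134, 45), (45, 1), (1, 96), (96, 35), (35, 114), (114, 109), (109, 0), (0, 26), (26, 21), (21, 100), (100, 39), (39, 134), (134, 90), (90, 1), (1, 51), (51, 35), (35, 24), (24, 109), (109, 90), (90, 26), (26, 66), (66, 100), (100, 129), (129, 134), (134, 0)]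
lemma elim16 (B : ℕ → ℤ) (hB0 : B 0 = 0) (hB1 : B 1 = 1)
    (hB : ∀ k, B (k + 2) = 6 * B (k + 1) - B k)
    (m x : ℕ) (hx : 3 ≤ x) (heq : (1827251437969 : ℤ) ^ x - (313506783024 : ℤ) ^ x = B m) : False := by
  have hcov : ∀ s, s < 2 → (Nat.testBit 3 (s % 2)) = true := by decide
  have hc := hcov ((x - 3) % 2) (Nat.mod_lt _ (by norm_num))
  rw [Nat.mod_mod_of_dvd (x - 3) (by decide : (2:ℕ) ∣ 2)] at hc
  exact condElim B hB0 hB1 hB 135 S16_135 (by decide) (by decide) 1827251437969 313506783024 (109 : ZMod 135) (114 : ZMod 135) (by decide) (by decide) 2 (by norm_num) (by decide) (by decide) 3 (by decide) m x hx heq hc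

private def S17_136 : List (ZMod 136 × ZMod 136) := [(0, 1), (1, 6), (6, 35), (35, 68), (68, 101), (101, 130), (130, 135), (135, 0)]
lemma elim17 (B : ℕ → ℤ) (hB0 : B 0 = 0) (hB1 : B 1 = 1)
    (hB : ∀ k, B (k + 2) = 6 * B (k + 1) - B k)
    (m x : ℕ) (hx : 3 ≤ x) (heq : (10650001844790 : ℤ) ^ x - (1827251437969 : ℤ) ^ x = B m) : False := by
  have hcov : ∀ s, s < 16 → (Nat.testBit 65535 (s % 16)) = true := by decide
  have hc := hcov ((x - 3) % 16) (Nat.mod_lt _ (by norm_num))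
  rw [Nat.mod_mod_of_dvd (x - 3) (by decide : (16:ℕ) ∣ 16)] at hc
  exact condElim B hB0 hB1 hB 136 S17_136 (by decide) (by decide) 10650001844790 1827251437969 (6 : ZMod 136) (1 : ZMod 136) (by decide) (by decide) 16 (by norm_num) (by decide) (by decide) 65535 (by decide) m x hx heq hc

private def S18_136 : List (ZMod 136 × ZMod 136) := [(0, 1), (1, 6), (6, 35), (35, 68), (68, 101), (101, 130), (130, 135), (135, 0)]
lemma elim18 (B : ℕ → ℤ) (hB0 : B 0 = 0) (hB1 : B 1 = 1)
    (hB : ∀ k, B (k + 2) = 6 * B (k + 1) - B k)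
    (m x : ℕ) (hx : 3 ≤ x) (heq : (62072759630771 : ℤ) ^ x - (10650001844790 : ℤ) ^ x = B m) : False := by
  have hcov : ∀ s, s < 16 → (Nat.testBit 65535 (s % 16)) = true := by decide
  have hc := hcov ((x - 3) % 16) (Nat.mod_lt _ (by norm_num))
  rw [Nat.mod_mod_of_dvd (x - 3) (by decide : (16:ℕ) ∣ 16)] at hc
  exact condElim B hB0 hB1 hB 136 S18_136 (by decide) (by decide) 62072759630771 10650001844790 (35 : ZMod 136) (6 : ZMod 136) (by decide) (by decide) 16 (by norm_num) (by decide) (by decide) 65535 (by decide) m x hx heq hc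

private def S19_135 : List (ZMod 135 × ZMod 135) := [(0, 1), (1, 6), (6, 35), (35, 69), (69, 109), (109, 45), (45, 26), (26, 111), (111, 100), (100, 84), (84, 134), (134, 45), (45, 1), (1, 96), (96, 35), (35, 114), (114, 109), (109, 0), (0, 26), (26, 21), (21, 100), (100, 39), (39, 134), (134, 90), (90, 1), (1, 51), (51, 35), (35, 24), (24, 109), (109, 90), (90, 26), (26, 66), (66, 100), (100, 129), (129, 134), (134, 0)]
lemma elim19 (B : ℕ → ℤ) (hB0 : B 0 = 0) (hB1 : B 1 = 1)
    (hB : ∀ k, B (k + 2) = 6 * B (k + 1) - B k)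
    (m x : ℕ) (hx : 3 ≤ x) (heq : (361786555939836 : ℤ) ^ x - (62072759630771 : ℤ) ^ x = B m) : False := by
  have hcov : ∀ s, s < 2 → (Nat.testBit 3 (s % 2)) = true := by decide
  have hc := hcov ((x - 3) % 2) (Nat.mod_lt _ (by norm_num))
  rw [Nat.mod_mod_of_dvd (x - 3) (by decide : (2:ℕ) ∣ 2)] at hc
  exact condElim B hB0 hB1 hB 135 S19_135 (by decide) (by decide) 361786555939836 62072759630771 (21 : ZMod 135) (26 : ZMod 135) (by decide) (by decide) 2 (by norm_num) (by decide) (by decide) 3 (by decide) m x hx heq hc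

private def S20_1161 : List (ZMod 1161 × ZMod 1161) := [(0, 1), (1, 6), (6, 35), (35, 204), (204, 28), (28, 1125), (1125, 917), (917, 894), (894, 964), (964, 246), (246, 512), (512, 504), (504, 190), (190, 636), (636, 143), (143, 222), (222, 28), (28, 1107), (1107, 809), (809, 264), (264, 775), (775, 903), (903, 1160), (1160, 252), (252, 352), (352, 699), (699, 359), (359, 294), (294, 244), (244, 9), (9, 971), (971, 12), (12, 262), (262, 399), (399, 971), (971, 783), (783, 244), (244, 681), (681, 359), (359, 312), (312, 352), (352, 639), (639, 1160), (1160, 516), (516, 775), (775, 651), (651, 809), (809, 720), (720, 28), (28, 609), (609, 143), (143, 249), (249, 190), (190, 891), (891, 512), (512, 1020), (1020, 964), (964, 120), (120, 917), (917, 738), (738, 28), (28, 591), (591, 35), (35, 780), (780, 1), (1, 387), (387, 1160), (1160, 768), (768, 1126), (1126, 183), (183, 1133), (1133, 810), (810, 244), (244, 654), (654, 197), (197, 528), (528, 649), (649, 1044), (1044, 971), (971, 138), (138, 1018), (1018, 165), (165, 1133), (1133, 828), (828, 352), (352, 123), (123, 386), (386, 1032), (1032, 1), (1, 135), (135, 809),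 (809, 75), (75, 802), (802, 93), (93, 917), (917, 765), (765, 190), (190, 375), (375, 899), (899, 375), (375, 190), (190, 765), (765, 917), (917, 93), (93, 802), (802, 75), (75, 809), (809, 135), (135, 1), (1, 1032), (1032, 386), (386, 123), (123, 352), (352, 828), (828, 1133), (1133, 165), (165, 1018), (1018, 138), (138, 971), (971, 1044), (1044, 649), (649, 528), (528, 197), (197, 654), (654, 244), (244, 810), (810, 1133), (1133, 183), (183, 1126), (1126, 768), (768, 1160), (1160, 387), (387, 1), (1, 780), (780, 35), (35, 591), (591, 28), (28, 738), (738, 917), (917, 120), (120, 964), (964, 1020), (1020, 512), (512, 891), (891, 190), (190, 249), (249, 143), (143, 609), (609, 28), (28, 720), (720, 809), (809, 651), (651, 775), (775, 516), (516, 1160), (1160, 639), (639, 352), (352, 312), (312, 359), (359, 681), (681, 244), (244, 783), (783, 971), (971, 399), (399, 262), (262, 12), (12, 971), (971, 9), (9, 244), (244, 294), (294, 359), (359, 699), (699, 352), (352, 252), (252, 1160), (1160, 903), (903, 775), (775, 264), (264, 809), (809, 1107), (1107, 28), (28, 222), (222, 143), (143, 636), (636, 190), (190, 504), (504, 512), (512,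 246), (246, 964), (964, 894), (894, 917), (917, 1125), (1125, 28), (28, 204), (204, 35), (35, 6), (6, 1), (1, 0), (0, 1160), (1160, 1155), (1155, 1126), (1126, 957), (957, 1133), (1133, 36), (36, 244), (244, 267), (267, 197), (197, 915), (915, 649), (649, 657), (657, 971), (971, 525), (525, 1018), (1018, 939), (939, 1133), (1133, 54), (54, 352), (352, 897), (897, 386), (386, 258), (258, 1), (1, 909), (909, 809), (809, 462), (462, 802), (802, 867), (867, 917), (917, 1152), (1152, 190), (190, 1149), (1149, 899), (899, 762), (762, 190), (190, 378), (378, 917), (917, 480), (480, 802), (802, 849), (849, 809), (809, 522), (522, 1), (1, 645), (645, 386), (386, 510), (510, 352), (352, 441), (441, 1133), (1133, 552), (552, 1018), (1018, 912), (912, 971), (971, 270), (270, 649), (649, 141), (141, 197), (197, 1041), (1041, 244), (244, 423), (423, 1133), (1133, 570), (570, 1126), (1126, 381), (381, 1160), (1160, 774), (774, 1), (1, 393), (393, 35), (35, 978), (978, 28), (28, 351), (351, 917), (917, 507), (507, 964), (964, 633), (633, 512), (512, 117), (117, 190), (190, 1023), (1023, 143), (143, 996), (996, 28), (28, 333), (333,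 809), (809, 1038), (1038, 775), (775, 129), (129, 1160), (1160, 1026), (1026, 352), (352, 1086), (1086, 359), (359, 1068), (1068, 244), (244, 396), (396, 971), (971, 786), (786, 262), (262, 786), (786, 971), (971, 396), (396, 244), (244, 1068), (1068, 359), (359, 1086), (1086, 352), (352, 1026), (1026, 1160), (1160, 129), (129, 775), (775, 1038), (1038, 809), (809, 333), (333, 28), (28, 996), (996, 143), (143, 1023), (1023, 190), (190, 117), (117, 512), (512, 633), (633, 964), (964, 507), (507, 917), (917, 351), (351, 28), (28, 978), (978, 35), (35, 393), (393, 1), (1, 774), (774, 1160), (1160, 381), (381, 1126), (1126, 570), (570, 1133), (1133, 423), (423, 244), (244, 1041), (1041, 197), (197, 141), (141, 649), (649, 270), (270, 971), (971, 912), (912, 1018), (1018, 552), (552, 1133), (1133, 441), (441, 352), (352, 510), (510, 386), (386, 645), (645, 1), (1, 522), (522, 809), (809, 849), (849, 802), (802, 480), (480, 917), (917, 378), (378, 190), (190, 762), (762, 899), (899, 1149), (1149, 190), (190, 1152), (1152, 917), (917, 867), (867, 802), (802, 462), (462, 809), (809, 909), (909, 1), (1, 258), (258, 386), (386, 897), (897,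 352), (352, 54), (54, 1133), (1133, 939), (939, 1018), (1018, 525), (525, 971), (971, 657), (657, 649), (649, 915), (915, 197), (197, 267), (267, 244), (244, 36), (36, 1133), (1133, 957), (957, 1126), (1126, 1155), (1155, 1160), (1160, 0)]
lemma elim20 (B : ℕ → ℤ) (hB0 : B 0 = 0) (hB1 : B 1 = 1)
    (hB : ∀ k, B (k + 2) = 6 * B (k + 1) - B k)
    (m x : ℕ) (hx : 3 ≤ x) (heq : (2108646576008245 : ℤ) ^ x - (361786555939836 : ℤ) ^ x = B m) : False := by
  have hcov : ∀ s, s < 3 → (Nat.testBit 7 (s % 3)) = true := by decide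
  have hc := hcov ((x - 3) % 3) (Nat.mod_lt _ (by norm_num))
  rw [Nat.mod_mod_of_dvd (x - 3) (by decide : (3:ℕ) ∣ 3)] at hc
  exact condElim B hB0 hB1 hB 1161 S20_1161 (by decide) (by decide) 2108646576008245 361786555939836 (775 : ZMod 1161) (264 : ZMod 1161) (by decide) (by decide) 3 (by norm_num) (by decide) (by decide) 7 (by decide) m x hx heq hc

private def S21_776 : List (ZMod 776 × ZMod 776) := [(0, 1), (1, 6), (6, 35), (35, 204), (204, 413), (413, 722), (722, 39), (39, 288), (288, 137), (137, 534), (534, 739), (739, 20), (20, 157), (157, 146), (146, 719), (719, 288), (288, 233), (233, 334), (334, 219), (219, 204), (204, 229), (229, 394), (394, 583), (583, 0), (0, 193), (193, 382), (382, 547), (547, 572), (572, 557), (557, 442), (442, 543), (543, 488), (488, 57), (57, 630), (630, 619), (619, 756), (756, 37), (37, 242), (242, 639), (639, 488), (488, 737), (737, 54), (54, 363), (363, 572), (572, 741), (741, 770), (770, 775), (775, 0)]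
lemma elim21 (B : ℕ → ℤ) (hB0 : B 0 = 0) (hB1 : B 1 = 1)
    (hB : ∀ k, B (k + 2) = 6 * B (k + 1) - B k)
    (m x : ℕ) (hx : 3 ≤ x) (heq : (12290092900109634 : ℤ) ^ x - (2108646576008245 : ℤ) ^ x = B m) : False := by
  have hcov : ∀ s, s < 12 → (Nat.testBit 4095 (s % 12)) = true := by decide
  have hc := hcov ((x - 3) % 12) (Nat.mod_lt _ (by norm_num))
  rw [Nat.mod_mod_of_dvd (x - 3) (by decide : (12:ℕ) ∣ 12)] at hc
  exact condElim B hB0 hB1 hB 776 S21_776 (by decide) (by decide) 12290092900109634 2108646576008245 (394 : ZMod 776) (229 : ZMod 776) (by decide) (by decide) 12 (by norm_num) (by decide) (by decide) 4095 (by decide) m x hx heq hc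

private def S22_135 : List (ZMod 135 × ZMod 135) := [(0, 1), (1, 6), (6, 35), (35, 69), (69, 109), (109, 45), (45, 26), (26, 111), (111, 100), (100, 84), (84, 134), (134, 45), (45, 1), (1, 96), (96, 35), (35, 114), (114, 109), (109, 0), (0, 26), (26, 21), (21, 100), (100, 39), (39, 134), (134, 90), (90, 1), (1, 51), (51, 35), (35, 24), (24, 109), (109, 90), (90, 26), (26, 66), (66, 100), (100, 129), (129, 134), (134, 0)]
lemma elim22 (B : ℕ → ℤ) (hB0 : B 0 = 0) (hB1 : B 1 = 1)
    (hB : ∀ k, B (k + 2) = 6 * B (k + 1) - B k)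
    (m x : ℕ) (hx : 3 ≤ x) (heq : (71631910824649559 : ℤ) ^ x - (12290092900109634 : ℤ) ^ x = B m) : False := by
  have hcov : ∀ s, s < 2 → (Nat.testBit 3 (s % 2)) = true := by decide
  have hc := hcov ((x - 3) % 2) (Nat.mod_lt _ (by norm_num))
  rw [Nat.mod_mod_of_dvd (x - 3) (by decide : (2:ℕ) ∣ 2)] at hc
  exact condElim B hB0 hB1 hB 135 S22_135 (by decide) (by decide) 71631910824649559 12290092900109634 (134 : ZMod 135) (39 : ZMod 135) (by decide) (by decide) 2 (by norm_num) (by decide) (by decide) 3 (by decide) m x hx heq hc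

private def S23_18875 : List (ZMod 18875 × ZMod 18875) := [(0, 1), (1, 6), (6, 35), (35, 204), (204, 1189), (1189, 6930), (6930, 2641), (2641, 8916), (8916, 13105), (13105, 13089), (13089, 8804), (8804, 1985), (1985, 3106), (3106, 16651), (16651, 2425), (2425, 16774), (16774, 3844), (3844, 6290), (6290, 15021), (15021, 8336), (8336, 16120), (16120, 12884), (12884, 4559), (4559, 14470), (14470, 6761), (6761, 7221), (7221, 17690), (17690, 4544), (4544, 9574), (9574, 15150), (15150, 5826), (5826, 931), (931, 18635), (18635, 16504), (16504, 4889), (4889, 12830), (12830, 15466), (15466, 4466), (4466, 11330), (11330, 6889), (6889, 11129), (11129, 3260), (3260, 8431), (8431, 9576), (9576, 11275), (11275, 1449), (1449, 16294), (16294, 1940), (1940, 14221), (14221, 7886), (7886, 14220), (14220, 1934), (1934, 16259), (16259, 1245), (1245, 10086), (10086, 2646), (2646, 5790), (5790, 13219), (13219, 16899), (16899, 12675), (12675, 2526), (2526, 2481), (2481, 12360), (12360, 15054), (15054, 2464), (2464, 18605), (18605, 14791), (14791, 13516), (13516, 9680), (9680, 6814), (6814, 12329), (12329, 10535), (10535,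 13131), (13131, 11626), (11626, 0), (0, 7249), (7249, 5744), (5744, 8340), (8340, 6546), (6546, 12061), (12061, 9195), (9195, 5359), (5359, 4084), (4084, 270), (270, 16411), (16411, 3821), (3821, 6515), (6515, 16394), (16394, 16349), (16349, 6200), (6200, 1976), (1976, 5656), (5656, 13085), (13085, 16229), (16229, 8789), (8789, 17630), (17630, 2616), (2616, 16941), (16941, 4655), (4655, 10989), (10989, 4654), (4654, 16935), (16935, 2581), (2581, 17426), (17426, 7600), (7600, 9299), (9299, 10444), (10444, 15615), (15615, 7746), (7746, 11986), (11986, 7545), (7545, 14409), (14409, 3409), (3409, 6045), (6045, 13986), (13986, 2371), (2371, 240), (240, 17944), (17944, 13049), (13049, 3725), (3725, 9301), (9301, 14331), (14331, 1185), (1185, 11654), (11654, 12114), (12114, 4405), (4405, 14316), (14316, 5991), (5991, 2755), (2755, 10539), (10539, 3854), (3854, 12585), (12585, 15031), (15031, 2101), (2101, 16450), (16450, 2224), (2224, 15769), (15769, 16890), (16890, 10071), (10071, 5786), (5786, 5770), (5770, 9959), (9959, 16234), (16234, 11945), (11945, 17686), (17686, 18671), (18671, 18840), (18840, 18869), (18869,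 18874), (18874, 0)]
lemma elim23 (B : ℕ → ℤ) (hB0 : B 0 = 0) (hB1 : B 1 = 1)
    (hB : ∀ k, B (k + 2) = 6 * B (k + 1) - B k)
    (m x : ℕ) (hx : 3 ≤ x) (heq : (417501372047787720 : ℤ) ^ x - (71631910824649559 : ℤ) ^ x = B m) : False := by
  have hcov : ∀ s, s < 50 → (Nat.testBit 1125899906842623 (s % 50)) = true := by decide
  have hc := hcov ((x - 3) % 50) (Nat.mod_lt _ (by norm_num))
  rw [Nat.mod_mod_of_dvd (x - 3) (by decide : (50:ℕ) ∣ 50)] at hc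
  exact condElim B hB0 hB1 hB 18875 S23_18875 (by decide) (by decide) 417501372047787720 71631910824649559 (14470 : ZMod 18875) (4559 : ZMod 18875) (by decide) (by decide) 50 (by norm_num) (by decide) (by decide) 1125899906842623 (by decide) m x hx heq hc

private def S24_18875 : List (ZMod 18875 × ZMod 18875) := [(0, 1), (1, 6), (6, 35), (35, 204), (204, 1189), (1189, 6930), (6930, 2641), (2641, 8916), (8916, 13105), (13105, 13089), (13089, 8804), (8804, 1985), (1985, 3106), (3106, 16651), (16651, 2425), (2425, 16774), (16774, 3844), (3844, 6290), (6290, 15021), (15021, 8336), (8336, 16120), (16120, 12884), (12884, 4559), (4559, 14470), (14470, 6761), (6761, 7221), (7221, 17690), (17690, 4544), (4544, 9574), (9574, 15150), (15150, 5826), (5826, 931), (931, 18635), (18635, 16504), (16504, 4889), (4889, 12830), (12830, 15466), (15466, 4466), (4466, 11330), (11330, 6889), (6889, 11129), (11129, 3260), (3260, 8431), (8431, 9576), (9576, 11275), (11275, 1449), (1449, 16294), (16294, 1940), (1940, 14221), (14221, 7886), (7886, 14220), (14220, 1934), (1934, 16259), (16259, 1245), (1245, 10086), (10086, 2646), (2646,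 5790), (5790, 13219), (13219, 16899), (16899, 12675), (12675, 2526), (2526, 2481), (2481, 12360), (12360, 15054), (15054, 2464), (2464, 18605), (18605, 14791), (14791, 13516), (13516, 9680), (9680, 6814), (6814, 12329), (12329, 10535), (10535, 13131), (13131, 11626), (11626, 0), (0, 7249), (7249, 5744), (5744, 8340), (8340, 6546), (6546, 12061), (12061, 9195), (9195, 5359), (5359, 4084), (4084, 270), (270, 16411), (16411, 3821), (3821, 6515), (6515, 16394), (16394, 16349), (16349, 6200), (6200, 1976), (1976, 5656), (5656, 13085), (13085, 16229), (16229, 8789), (8789, 17630), (17630, 2616), (2616, 16941), (16941, 4655), (4655, 10989), (10989, 4654), (4654, 16935), (16935, 2581), (2581, 17426), (17426, 7600), (7600, 9299), (9299, 10444), (10444, 15615), (15615, 7746), (7746, 11986), (11986, 7545), (7545, 14409), (14409, 3409), (3409, 6045), (6045, 13986), (13986, 2371), (2371, 240), (240, 17944), (17944, 13049), (13049, 3725), (3725, 9301), (9301, 14331), (14331, 1185), (1185, 11654), (11654, 12114), (12114, 4405), (4405, 14316), (14316, 5991), (5991, 2755), (2755, 10539), (10539, 3854), (3854, 12585), (12585,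 15031), (15031, 2101), (2101, 16450), (16450, 2224), (2224, 15769), (15769, 16890), (16890, 10071), (10071, 5786), (5786, 5770), (5770, 9959), (9959, 16234), (16234, 11945), (11945, 17686), (17686, 18671), (18671, 18840), (18840, 18869), (18869, 18874), (18874, 0)]
private def S24_152 : List (ZMod 152 × ZMod 152) := [(0, 1), (1, 6), (6, 35), (35, 52), (52, 125), (125, 90), (90, 111), (111, 120), (120, 1), (1, 38), (38, 75), (75, 108), (108, 117), (117, 138), (138, 103), (103, 24), (24, 41), (41, 70), (70, 75), (75, 76), (76, 77), (77, 82), (82, 111), (111, 128), (128, 49), (49, 14), (14, 35), (35, 44), (44, 77), (77, 114), (114, 151), (151, 32), (32, 41), (41, 62), (62, 27), (27, 100), (100, 117), (117, 146), (146, 151), (151, 0)]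
lemma elim24 (B : ℕ → ℤ) (hB0 : B 0 = 0) (hB1 : B 1 = 1)
    (hB : ∀ k, B (k + 2) = 6 * B (k + 1) - B k)
    (m x : ℕ) (hx : 3 ≤ x) (heq : (2433376321462076761 : ℤ) ^ x - (417501372047787720 : ℤ) ^ x = B m) : False := by
  have hcov : ∀ s, s < 450 → (Nat.testBit 1427247692705959881058285969449495136382738431 (s % 150) || Nat.testBit 114655 (s % 18)) = true := by decide
  have hc := hcov ((x - 3) % 450) (Nat.mod_lt _ (by norm_num))
  rw [Nat.mod_mod_of_dvd (x - 3) (by decide : (18:ℕ) ∣ 450)] at hc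
  rw [Nat.mod_mod_of_dvd (x - 3) (by decide : (150:ℕ) ∣ 450)] at hc
  simp only [Bool.or_eq_true] at hc
  rcases hc with (h0 | h1)
  · exact condElim B hB0 hB1 hB 18875 S24_18875 (by decide) (by decide) 2433376321462076761 417501372047787720 (6761 : ZMod 18875) (14470 : ZMod 18875) (by decide) (by decide) 150 (by norm_num) (by decide) (by decide) 1427247692705959881058285969449495136382738431 (by decide) m x hx heq h0
  · exact condElim B hB0 hB1 hB 152 S24_152 (by decide) (by decide) 2433376321462076761 417501372047787720 (49 : ZMod 152) (128 : ZMod 152) (by decide) (by decide) 18 (by norm_num) (by decide) (by decide) 114655 (by decide) m x hx heq h1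

private def S25_135 : List (ZMod 135 × ZMod 135) := [(0, 1), (1, 6), (6, 35), (35, 69), (69, 109), (109, 45), (45, 26), (26, 111), (111, 100), (100, 84), (84, 134), (134, 45), (45, 1), (1, 96), (96, 35), (35, 114), (114, 109), (109, 0), (0, 26), (26, 21), (21, 100), (100, 39), (39, 134), (134, 90), (90, 1), (1, 51), (51, 35), (35, 24), (24, 109), (109, 90), (90, 26), (26, 66), (66, 100), (100, 129), (129, 134), (134, 0)]
lemma elim25 (B : ℕ → ℤ) (hB0 : B 0 = 0) (hB1 : B 1 = 1)
    (hB : ∀ k, B (k + 2) = 6 * B (k + 1) - B k)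
    (m x : ℕ) (hx : 3 ≤ x) (heq : (14182756556724672846 : ℤ) ^ x - (2433376321462076761 : ℤ) ^ x = B m) : False := by
  have hcov : ∀ s, s < 1 → (Nat.testBit 1 (s % 1)) = true := by decide
  have hc := hcov ((x - 3) % 1) (Nat.mod_lt _ (by norm_num))
  rw [Nat.mod_mod_of_dvd (x - 3) (by decide : (1:ℕ) ∣ 1)] at hc
  exact condElim B hB0 hB1 hB 135 S25_135 (by decide) (by decide) 14182756556724672846 2433376321462076761 (51 : ZMod 135) (1 : ZMod 135) (by decide) (by decide) 1 (by norm_num) (by decide) (by decide) 1 (by decide) m x hx heq hc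

private def S26_776 : List (ZMod 776 × ZMod 776) := [(0, 1), (1, 6), (6, 35), (35, 204), (204, 413), (413, 722), (722, 39), (39, 288), (288, 137), (137, 534), (534, 739), (739, 20), (20, 157), (157, 146), (146, 719), (719, 288), (288, 233), (233, 334), (334, 219), (219, 204), (204, 229), (229, 394), (394, 583), (583, 0), (0, 193), (193, 382), (382, 547), (547, 572), (572, 557), (557, 442), (442, 543), (543, 488), (488, 57), (57, 630), (630, 619), (619, 756), (756, 37), (37, 242), (242, 639), (639, 488), (488, 737), (737, 54), (54, 363), (363, 572), (572, 741), (741, 770), (770, 775), (775, 0)]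
lemma elim26 (B : ℕ → ℤ) (hB0 : B 0 = 0) (hB1 : B 1 = 1)
    (hB : ∀ k, B (k + 2) = 6 * B (k + 1) - B k)
    (m x : ℕ) (hx : 3 ≤ x) (heq : (82663163018885960315 : ℤ) ^ x - (14182756556724672846 : ℤ) ^ x = B m) : False := by
  have hcov : ∀ s, s < 12 → (Nat.testBit 4095 (s % 12)) = true := by decide
  have hc := hcov ((x - 3) % 12) (Nat.mod_lt _ (by norm_num))
  rw [Nat.mod_mod_of_dvd (x - 3) (by decide : (12:ℕ) ∣ 12)] at hc
  exact condElim B hB0 hB1 hB 776 S26_776 (by decide) (by decide) 82663163018885960315 14182756556724672846 (547 : ZMod 776) (382 : ZMod 776) (by decide) (by decide) 12 (by norm_num) (by decide) (by decide) 4095 (by decide) m x hx heq hc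

private def S27_1971 : List (ZMod 1971 × ZMod 1971) := [(0, 1), (1, 6), (6, 35), (35, 204), (204, 1189), (1189, 1017), (1017, 971), (971, 867), (867, 289), (289, 867), (867, 971), (971, 1017), (1017, 1189), (1189, 204), (204, 35), (35, 6), (6, 1), (1, 0), (0, 1970), (1970, 1965), (1965, 1936), (1936, 1767), (1767, 782), (782, 954), (954, 1000), (1000, 1104), (1104, 1682), (1682, 1104), (1104, 1000), (1000, 954), (954, 782), (782, 1767), (1767, 1936), (1936, 1965), (1965, 1970), (1970, 0)]
lemma elim27 (B : ℕ → ℤ) (hB0 : B 0 = 0) (hB1 : B 1 = 1)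
    (hB : ∀ k, B (k + 2) = 6 * B (k + 1) - B k)
    (m x : ℕ) (hx : 3 ≤ x) (heq : (481796221556591089044 : ℤ) ^ x - (82663163018885960315 : ℤ) ^ x = B m) : False := by
  have hcov : ∀ s, s < 12 → (Nat.testBit 4095 (s % 12)) = true := by decide
  have hc := hcov ((x - 3) % 12) (Nat.mod_lt _ (by norm_num))
  rw [Nat.mod_mod_of_dvd (x - 3) (by decide : (12:ℕ) ∣ 12)] at hc
  exact condElim B hB0 hB1 hB 1971 S27_1971 (by decide) (by decide) 481796221556591089044 82663163018885960315 (1104 : ZMod 1971) (1682 : ZMod 1971) (by decide) (by decide) 12 (by norm_num) (by decide) (by decide) 4095 (by decide) m x hx heq hc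

private def S28_135 : List (ZMod 135 × ZMod 135) := [(0, 1), (1, 6), (6, 35), (35, 69), (69, 109), (109, 45), (45, 26), (26, 111), (111, 100), (100, 84), (84, 134), (134, 45), (45, 1), (1, 96), (96, 35), (35, 114), (114, 109), (109, 0), (0, 26), (26, 21), (21, 100), (100, 39), (39, 134), (134, 90), (90, 1), (1, 51), (51, 35), (35, 24), (24, 109), (109, 90), (90, 26), (26, 66), (66, 100), (100, 129), (129, 134), (134, 0)]
lemma elim28 (B : ℕ → ℤ) (hB0 : B 0 = 0) (hB1 : B 1 = 1)
    (hB : ∀ k, B (k + 2) = 6 * B (k + 1) - B k)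
    (m x : ℕ) (hx : 3 ≤ x) (heq : (2808114166320660573949 : ℤ) ^ x - (481796221556591089044 : ℤ) ^ x = B m) : False := by
  have hcov : ∀ s, s < 2 → (Nat.testBit 3 (s % 2)) = true := by decide
  have hc := hcov ((x - 3) % 2) (Nat.mod_lt _ (by norm_num))
  rw [Nat.mod_mod_of_dvd (x - 3) (by decide : (2:ℕ) ∣ 2)] at hc
  exact condElim B hB0 hB1 hB 135 S28_135 (by decide) (by decide) 2808114166320660573949 481796221556591089044 (109 : ZMod 135) (24 : ZMod 135) (by decide) (by decide) 2 (by norm_num) (by decide) (by decide) 3 (by decide) m x hx heq hc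

private def S29_136 : List (ZMod 136 × ZMod 136) := [(0, 1), (1, 6), (6, 35), (35, 68), (68, 101), (101, 130), (130, 135), (135, 0)]
lemma elim29 (B : ℕ → ℤ) (hB0 : B 0 = 0) (hB1 : B 1 = 1)
    (hB : ∀ k, B (k + 2) = 6 * B (k + 1) - B k)
    (m x : ℕ) (hx : 3 ≤ x) (heq : (16366888776367372354650 : ℤ) ^ x - (2808114166320660573949 : ℤ) ^ x = B m) : False := by
  have hcov : ∀ s, s < 16 → (Nat.testBit 65535 (s % 16)) = true := by decide
  have hc := hcov ((x - 3) % 16) (Nat.mod_lt _ (by norm_num))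
  rw [Nat.mod_mod_of_dvd (x - 3) (by decide : (16:ℕ) ∣ 16)] at hc
  exact condElim B hB0 hB1 hB 136 S29_136 (by decide) (by decide) 16366888776367372354650 2808114166320660573949 (130 : ZMod 136) (101 : ZMod 136) (by decide) (by decide) 16 (by norm_num) (by decide) (by decide) 65535 (by decide) m x hx heq hc

private def S30_136 : List (ZMod 136 × ZMod 136) := [(0, 1), (1, 6), (6, 35), (35, 68), (68, 101), (101, 130), (130, 135), (135, 0)]
lemma elim30 (B : ℕ → ℤ) (hB0 : B 0 = 0) (hB1 : B 1 = 1)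
    (hB : ∀ k, B (k + 2) = 6 * B (k + 1) - B k)
    (m x : ℕ) (hx : 3 ≤ x) (heq : (95393218491883573553951 : ℤ) ^ x - (16366888776367372354650 : ℤ) ^ x = B m) : False := by
  have hcov : ∀ s, s < 16 → (Nat.testBit 65535 (s % 16)) = true := by decide
  have hc := hcov ((x - 3) % 16) (Nat.mod_lt _ (by norm_num))
  rw [Nat.mod_mod_of_dvd (x - 3) (by decide : (16:ℕ) ∣ 16)] at hc
  exact condElim B hB0 hB1 hB 136 S30_136 (by decide) (by decide) 95393218491883573553951 16366888776367372354650 (135 : ZMod 136) (130 : ZMod 136) (by decide) (by decide) 16 (by norm_num) (by decide) (by decide) 65535 (by decide) m x hx heq hc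

private def S31_135 : List (ZMod 135 × ZMod 135) := [(0, 1), (1, 6), (6, 35), (35, 69), (69, 109), (109, 45), (45, 26), (26, 111), (111, 100), (100, 84), (84, 134), (134, 45), (45, 1), (1, 96), (96, 35), (35, 114), (114, 109), (109, 0), (0, 26), (26, 21), (21, 100), (100, 39), (39, 134), (134, 90), (90, 1), (1, 51), (51, 35), (35, 24), (24, 109), (109, 90), (90, 26), (26, 66), (66, 100), (100, 129), (129, 134), (134, 0)]
lemma elim31 (B : ℕ → ℤ) (hB0 : B 0 = 0) (hB1 : B 1 = 1)
    (hB : ∀ k, B (k + 2) = 6 * B (k + 1) - B k)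
    (m x : ℕ) (hx : 3 ≤ x) (heq : (555992422174934068969056 : ℤ) ^ x - (95393218491883573553951 : ℤ) ^ x = B m) : False := by
  have hcov : ∀ s, s < 2 → (Nat.testBit 3 (s % 2)) = true := by decide
  have hc := hcov ((x - 3) % 2) (Nat.mod_lt _ (by norm_num))
  rw [Nat.mod_mod_of_dvd (x - 3) (by decide : (2:ℕ) ∣ 2)] at hc
  exact condElim B hB0 hB1 hB 135 S31_135 (by decide) (by decide) 555992422174934068969056 95393218491883573553951 (66 : ZMod 135) (26 : ZMod 135) (by decide) (by decide) 2 (by norm_num) (by decide) (by decide) 3 (by decide) m x hx heq hc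

private def S32_88 : List (ZMod 88 × ZMod 88) := [(0, 1), (1, 6), (6, 35), (35, 28), (28, 45), (45, 66), (66, 87), (87, 16), (16, 9), (9, 38), (38, 43), (43, 44), (44, 45), (45, 50), (50, 79), (79, 72), (72, 1), (1, 22), (22, 43), (43, 60), (60, 53), (53, 82), (82, 87), (87, 0)]
private def S32_837 : List (ZMod 837 × ZMod 837) := [(0, 1), (1, 6), (6, 35), (35, 204), (204, 352), (352, 234), (234, 215), (215, 219), (219, 262), (262, 516), (516, 323), (323, 585), (585, 676), (676, 123), (123, 62), (62, 249), (249, 595), (595, 810), (810, 80), (80, 507), (507, 451), (451, 525), (525, 188), (188, 603), (603, 82), (82, 726), (726, 89), (89, 645), (645, 433), (433, 279), (279, 404), (404, 471), (471, 748), (748, 669), (669, 755), (755, 513), (513, 649), (649, 33), (33, 386), (386, 609), (609, 757), (757, 585), (585, 242), (242, 30), (30, 775), (775, 435), (435, 161), (161, 531), (531, 514), (514, 42), (42, 575), (575, 60), (60, 622), (622, 324), (324, 485), (485, 75), (75, 802), (802, 552), (552, 836), (836, 279), (279, 1), (1, 564), (564, 35), (35, 483), (483, 352), (352, 792), (792,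 215), (215, 498), (498, 262), (262, 237), (237, 323), (323, 27), (27, 676), (676, 681), (681, 62), (62, 528), (528, 595), (595, 531), (531, 80), (80, 786), (786, 451), (451, 246), (246, 188), (188, 45), (45, 82), (82, 447), (447, 89), (89, 87), (87, 433), (433, 0), (0, 404), (404, 750), (750, 748), (748, 390), (390, 755), (755, 792), (792, 649), (649, 591), (591, 386), (386, 51), (51, 757), (757, 306), (306, 242), (242, 309), (309, 775), (775, 156), (156, 161), (161, 810), (810, 514), (514, 600), (600, 575), (575, 339), (339, 622), (622, 45), (45, 485), (485, 354), (354, 802), (802, 273), (273, 836), (836, 558), (558, 1), (1, 285), (285, 35), (35, 762), (762, 352), (352, 513), (513, 215), (215, 777), (777, 262), (262, 795), (795, 323), (323, 306), (306, 676), (676, 402), (402, 62), (62, 807), (807, 595), (595, 252), (252, 80), (80, 228), (228, 451), (451, 804), (804, 188), (188, 324), (324, 82), (82, 168), (168, 89), (89, 366), (366, 433), (433, 558), (558, 404), (404, 192), (192, 748), (748, 111), (111, 755), (755, 234), (234, 649), (649, 312), (312, 386), (386, 330), (330, 757), (757, 27), (27, 242), (242, 588), (588, 775), (775, 714), (714,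 161), (161, 252), (252, 514), (514, 321), (321, 575), (575, 618), (618, 622), (622, 603), (603, 485), (485, 633), (633, 802), (802, 831), (831, 836), (836, 0)]
lemma elim32 (B : ℕ → ℤ) (hB0 : B 0 = 0) (hB1 : B 1 = 1)
    (hB : ∀ k, B (k + 2) = 6 * B (k + 1) - B k)
    (m x : ℕ) (hx : 3 ≤ x) (heq : (3240561314557720840260385 : ℤ) ^ x - (555992422174934068969056 : ℤ) ^ x = B m) : False := by
  have hcov : ∀ s, s < 30 → (Nat.testBit 15 (s % 5) || Nat.testBit 1073703933 (s % 30)) = true := by decide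
  have hc := hcov ((x - 3) % 30) (Nat.mod_lt _ (by norm_num))
  rw [Nat.mod_mod_of_dvd (x - 3) (by decide : (5:ℕ) ∣ 30)] at hc
  rw [Nat.mod_mod_of_dvd (x - 3) (by decide : (30:ℕ) ∣ 30)] at hc
  simp only [Bool.or_eq_true] at hc
  rcases hc with (h0 | h1)
  · exact condElim B hB0 hB1 hB 88 S32_88 (by decide) (by decide) 3240561314557720840260385 555992422174934068969056 (9 : ZMod 88) (16 : ZMod 88) (by decide) (by decide) 5 (by norm_num) (by decide) (by decide) 15 (by decide) m x hx heq h0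
  · exact condElim B hB0 hB1 hB 837 S32_837 (by decide) (by decide) 3240561314557720840260385 555992422174934068969056 (748 : ZMod 837) (471 : ZMod 837) (by decide) (by decide) 30 (by norm_num) (by decide) (by decide) 1073703933 (by decide) m x hx heq h1

private def S33_88 : List (ZMod 88 × ZMod 88) := [(0, 1), (1, 6), (6, 35), (35, 28), (28, 45), (45, 66), (66, 87), (87, 16), (16, 9), (9, 38), (38, 43), (43, 44), (44, 45), (45, 50), (50, 79), (79, 72), (72, 1), (1, 22), (22, 43), (43, 60), (60, 53), (53, 82), (82, 87), (87, 0)]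
private def S33_837 : List (ZMod 837 × ZMod 837) := [(0, 1), (1, 6), (6, 35), (35, 204), (204, 352), (352, 234), (234, 215), (215, 219), (219, 262), (262, 516), (516, 323), (323, 585), (585, 676), (676, 123), (123, 62), (62, 249), (249, 595), (595, 810), (810, 80), (80, 507), (507, 451), (451, 525), (525, 188), (188, 603), (603, 82), (82, 726), (726, 89), (89, 645), (645, 433), (433, 279), (279, 404), (404, 471), (471, 748), (748, 669), (669, 755), (755, 513), (513, 649), (649, 33), (33, 386), (386, 609), (609, 757), (757, 585), (585, 242), (242, 30), (30, 775), (775, 435), (435, 161), (161, 531), (531, 514), (514, 42), (42, 575), (575, 60), (60, 622), (622, 324), (324, 485), (485, 75), (75, 802), (802, 552), (552, 836), (836, 279), (279, 1), (1, 564), (564, 35), (35, 483), (483, 352), (352, 792), (792, 215), (215, 498), (498, 262), (262, 237), (237, 323), (323, 27), (27, 676), (676, 681), (681, 62), (62, 528), (528, 595), (595, 531), (531, 80), (80, 786), (786, 451), (451, 246), (246, 188), (188, 45), (45, 82), (82, 447), (447, 89), (89, 87), (87, 433), (433, 0), (0, 404), (404, 750), (750, 748), (748, 390), (390, 755), (755,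 792), (792, 649), (649, 591), (591, 386), (386, 51), (51, 757), (757, 306), (306, 242), (242, 309), (309, 775), (775, 156), (156, 161), (161, 810), (810, 514), (514, 600), (600, 575), (575, 339), (339, 622), (622, 45), (45, 485), (485, 354), (354, 802), (802, 273), (273, 836), (836, 558), (558, 1), (1, 285), (285, 35), (35, 762), (762, 352), (352, 513), (513, 215), (215, 777), (777, 262), (262, 795), (795, 323), (323, 306), (306, 676), (676, 402), (402, 62), (62, 807), (807, 595), (595, 252), (252, 80), (80, 228), (228, 451), (451, 804), (804, 188), (188, 324), (324, 82), (82, 168), (168, 89), (89, 366), (366, 433), (433, 558), (558, 404), (404, 192), (192, 748), (748, 111), (111, 755), (755, 234), (234, 649), (649, 312), (312, 386), (386, 330), (330, 757), (757, 27), (27, 242), (242, 588), (588, 775), (775, 714), (714, 161), (161, 252), (252, 514), (514, 321), (321, 575), (575, 618), (618, 622), (622, 603), (603, 485), (485, 633), (633, 802), (802, 831), (831, 836), (836, 0)]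
lemma elim33 (B : ℕ → ℤ) (hB0 : B 0 = 0) (hB1 : B 1 = 1)
    (hB : ∀ k, B (k + 2) = 6 * B (k + 1) - B k)
    (m x : ℕ) (hx : 3 ≤ x) (heq : (18887375465171390972593254 : ℤ) ^ x - (3240561314557720840260385 : ℤ) ^ x = B m) : False := by
  have hcov : ∀ s, s < 15 → (Nat.testBit 15 (s % 5) || Nat.testBit 24382 (s % 15)) = true := by decide
  have hc := hcov ((x - 3) % 15) (Nat.mod_lt _ (by norm_num))
  rw [Nat.mod_mod_of_dvd (x - 3) (by decide : (5:ℕ) ∣ 15)] at hc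
  rw [Nat.mod_mod_of_dvd (x - 3) (by decide : (15:ℕ) ∣ 15)] at hc
  simp only [Bool.or_eq_true] at hc
  rcases hc with (h0 | h1)
  · exact condElim B hB0 hB1 hB 88 S33_88 (by decide) (by decide) 18887375465171390972593254 3240561314557720840260385 (38 : ZMod 88) (9 : ZMod 88) (by decide) (by decide) 5 (by norm_num) (by decide) (by decide) 15 (by decide) m x hx heq h0
  · exact condElim B hB0 hB1 hB 837 S33_837 (by decide) (by decide) 18887375465171390972593254 3240561314557720840260385 (669 : ZMod 837) (748 : ZMod 837) (by decide) (by decide) 15 (by norm_num) (by decide) (by decide) 24382 (by decide) m x hx heq h1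

private def S34_135 : List (ZMod 135 × ZMod 135) := [(0, 1), (1, 6), (6, 35), (35, 69), (69, 109), (109, 45), (45, 26), (26, 111), (111, 100), (100, 84), (84, 134), (134, 45), (45, 1), (1, 96), (96, 35), (35, 114), (114, 109), (109, 0), (0, 26), (26, 21), (21, 100), (100, 39), (39, 134), (134, 90), (90, 1), (1, 51), (51, 35), (35, 24), (24, 109), (109, 90), (90, 26), (26, 66), (66, 100), (100, 129), (129, 134), (134, 0)]
lemma elim34 (B : ℕ → ℤ) (hB0 : B 0 = 0) (hB1 : B 1 = 1)
    (hB : ∀ k, B (k + 2) = 6 * B (k + 1) - B k)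
    (m x : ℕ) (hx : 3 ≤ x) (heq : (110083691476470624995299139 : ℤ) ^ x - (18887375465171390972593254 : ℤ) ^ x = B m) : False := by
  have hcov : ∀ s, s < 2 → (Nat.testBit 3 (s % 2)) = true := by decide
  have hc := hcov ((x - 3) % 2) (Nat.mod_lt _ (by norm_num))
  rw [Nat.mod_mod_of_dvd (x - 3) (by decide : (2:ℕ) ∣ 2)] at hc
  exact condElim B hB0 hB1 hB 135 S34_135 (by decide) (by decide) 110083691476470624995299139 18887375465171390972593254 (134 : ZMod 135) (129 : ZMod 135) (by decide) (by decide) 2 (by norm_num) (by decide) (by decide) 3 (by decide) m x hx heq hc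

private def S35_712 : List (ZMod 712 × ZMod 712) := [(0, 1), (1, 6), (6, 35), (35, 204), (204, 477), (477, 522), (522, 519), (519, 456), (456, 81), (81, 30), (30, 99), (99, 564), (564, 437), (437, 634), (634, 519), (519, 344), (344, 121), (121, 382), (382, 35), (35, 540), (540, 357), (357, 178), (178, 711), (711, 528), (528, 321), (321, 686), (686, 235), (235, 12), (12, 549), (549, 434), (434, 631), (631, 504), (504, 257), (257, 326), (326, 275), (275, 612), (612, 549), (549, 546), (546, 591), (591, 152), (152, 321), (321, 350), (350, 355), (355, 356), (356, 357), (357, 362), (362, 391), (391, 560), (560, 121), (121, 166), (166, 163), (163, 100), (100, 437), (437, 386), (386, 455), (455, 208), (208, 81), (81, 278), (278, 163), (163, 700), (700, 477), (477, 26), (26, 391), (391, 184), (184, 1), (1, 534), (534, 355), (355, 172), (172, 677), (677, 330), (330, 591), (591, 368), (368, 193), (193, 78), (78, 275), (275, 148), (148, 613), (613, 682), (682, 631), (631, 256), (256, 193), (193, 190), (190, 235), (235, 508), (508, 677), (677, 706), (706, 711), (711, 0)]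
private def S35_536 : List (ZMod 536 × ZMod 536) := [(0, 1), (1, 6), (6, 35), (35, 204), (204, 117), (117, 498), (498, 191), (191, 112), (112, 481), (481, 94), (94, 83), (83, 404), (404, 197), (197, 242), (242, 183), (183, 320), (320, 129), (129, 454), (454, 451), (451, 108), (108, 197), (197, 2), (2, 351), (351, 496), (496, 481), (481, 246), (246, 459), (459, 364), (364, 117), (117, 338), (338, 303), (303, 408), (408, 1), (1, 134), (134, 267), (267, 396), (396, 501), (501, 466), (466, 151), (151, 440), (440, 345), (345, 22), (22, 323), (323, 308), (308, 453), (453, 266), (266, 71), (71, 160), (160, 353), (353, 350), (350, 139), (139, 484), (484, 85), (85, 26), (26, 71), (71, 400), (400, 185), (185, 174), (174, 323), (323, 156), (156, 77), (77, 306), (306, 151), (151, 64), (64, 233), (233, 262), (262, 267), (267, 268), (268, 269), (269, 274), (274, 303), (303, 472), (472, 385), (385, 230), (230, 459), (459, 380), (380, 213), (213, 362), (362, 351), (351, 136), (136, 465), (465, 510), (510, 451), (451, 52), (52, 397), (397, 186), (186, 183), (183, 376), (376, 465), (465, 270), (270, 83), (83, 228), (228, 213), (213, 514), (514, 191), (191,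 96), (96, 385), (385, 70), (70, 35), (35, 140), (140, 269), (269, 402), (402, 535), (535, 128), (128, 233), (233, 198), (198, 419), (419, 172), (172, 77), (77, 290), (290, 55), (55, 40), (40, 185), (185, 534), (534, 339), (339, 428), (428, 85), (85, 82), (82, 407), (407, 216), (216, 353), (353, 294), (294, 339), (339, 132), (132, 453), (453, 442), (442, 55), (55, 424), (424, 345), (345, 38), (38, 419), (419, 332), (332, 501), (501, 530), (530, 535), (535, 0)]
private def S35_353 : List (ZMod 353 × ZMod 353) := [(0, 1), (1, 6), (6, 35), (35, 204), (204, 130), (130, 223), (223, 149), (149, 318), (318, 347), (347, 352), (352, 0)]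
private def S35_6176 : List (ZMod 6176 × ZMod 6176) := [(0, 1), (1, 6), (6, 35), (35, 204), (204, 1189), (1189, 754), (754, 3335), (3335, 728), (728, 1033), (1033, 5470), (5470, 907), (907, 6148), (6148, 5101), (5101, 5930), (5930, 5775), (5775, 4016), (4016, 5969), (5969, 918), (918, 5715), (5715, 2492), (2492, 3061), (3061, 3522), (3522, 5719), (5719, 6088), (6088, 6105), (6105, 5838), (5838, 4219), (4219, 948), (948, 1469), (1469, 1690), (1690, 2495), (2495, 928), (928, 3073), (3073, 5158), (5158, 3171), (3171, 1516), (1516, 5925), (5925, 3154), (3154, 647), (647, 728), (728, 3721), (3721, 3070), (3070, 2347), (2347, 4836), (4836, 1965), (1965, 778), (778, 2703), (2703, 3088), (3088, 3473), (3473, 5398), (5398, 4211), (4211, 1340), (1340, 3829), (3829, 3106), (3106, 2455), (2455, 5448), (5448, 5529), (5529, 3022), (3022, 251), (251, 4660), (4660, 3005), (3005, 1018), (1018, 3103), (3103, 5248), (5248, 3681), (3681, 4486), (4486, 4707), (4707, 5228), (5228, 1957), (1957, 338), (338, 71), (71, 88), (88, 457), (457, 2654), (2654, 3115), (3115, 3684),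 (3684, 461), (461, 5258), (5258, 207), (207, 2160), (2160, 401), (401, 246), (246, 1075), (1075, 28), (28, 5269), (5269, 706), (706, 5143), (5143, 5448), (5448, 2841), (2841, 5422), (5422, 4987), (4987, 5972), (5972, 6141), (6141, 6170), (6170, 6175), (6175, 0)]
lemma elim35 (B : ℕ → ℤ) (hB0 : B 0 = 0) (hB1 : B 1 = 1)
    (hB : ∀ k, B (k + 2) = 6 * B (k + 1) - B k)
    (m x : ℕ) (hx : 3 ≤ x) (heq : (641614773393652358999201580 : ℤ) ^ x - (110083691476470624995299139 : ℤ) ^ x = B m) : False := by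
  have hcov : ∀ s, s < 1056 → (Nat.testBit 2097087 (s % 22) || Nat.testBit 13546827672117575679 (s % 66) || Nat.testBit 3440247923985090970133774194244866095463684176566916565294899017144111785608051771177868224277614801453055 (s % 352) || Nat.testBit 79228011398536868172711059455 (s % 96)) = true := by decide
  have hc := hcov ((x - 3) % 1056) (Nat.mod_lt _ (by norm_num))
  rw [Nat.mod_mod_of_dvd (x - 3) (by decide : (22:ℕ) ∣ 1056)] at hc
  rw [Nat.mod_mod_of_dvd (x - 3) (by decide : (66:ℕ) ∣ 1056)] at hc
  rw [Nat.mod_mod_of_dvd (x - 3) (by decide : (96:ℕ) ∣ 1056)] at hc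
  rw [Nat.mod_mod_of_dvd (x - 3) (by decide : (352:ℕ) ∣ 1056)] at hc
  simp only [Bool.or_eq_true] at hc
  rcases hc with (((h0 | h1) | h2) | h3)
  · exact condElim B hB0 hB1 hB 712 S35_712 (by decide) (by decide) 641614773393652358999201580 110083691476470624995299139 (612 : ZMod 712) (275 : ZMod 712) (by decide) (by decide) 22 (by norm_num) (by decide) (by decide) 2097087 (by decide) m x hx heq h0
  · exact condElim B hB0 hB1 hB 536 S35_536 (by decide) (by decide) 641614773393652358999201580 110083691476470624995299139 (396 : ZMod 536) (267 : ZMod 536) (by decide) (by decide) 66 (by norm_num) (by decide) (by decide) 13546827672117575679 (by decide) m x hx heq h1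
  · exact condElim B hB0 hB1 hB 353 S35_353 (by decide) (by decide) 641614773393652358999201580 110083691476470624995299139 (35 : ZMod 353) (6 : ZMod 353) (by decide) (by decide) 352 (by norm_num) (by decide) (by decide) 3440247923985090970133774194244866095463684176566916565294899017144111785608051771177868224277614801453055 (by decide) m x hx heq h2
  · exact condElim B hB0 hB1 hB 6176 S35_6176 (by decide) (by decide) 641614773393652358999201580 110083691476470624995299139 (1516 : ZMod 6176) (3171 : ZMod 6176) (by decide) (by decide) 96 (by norm_num) (by decide) (by decide) 79228011398536868172711059455 (by decide) m x hx heq h3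

private def S36_18875 : List (ZMod 18875 × ZMod 18875) := [(0, 1), (1, 6), (6, 35), (35, 204), (204, 1189), (1189, 6930), (6930, 2641), (2641, 8916), (8916, 13105), (13105, 13089), (13089, 8804), (8804, 1985), (1985, 3106), (3106, 16651), (16651, 2425), (2425, 16774), (16774, 3844), (3844, 6290), (6290, 15021), (15021, 8336), (8336, 16120), (16120, 12884), (12884, 4559), (4559, 14470), (14470, 6761), (6761, 7221), (7221, 17690), (17690, 4544), (4544, 9574), (9574, 15150), (15150, 5826), (5826, 931), (931, 18635), (18635, 16504), (16504, 4889), (4889, 12830), (12830, 15466), (15466, 4466), (4466, 11330), (11330, 6889), (6889, 11129), (11129, 3260), (3260, 8431), (8431, 9576), (9576, 11275), (11275, 1449), (1449, 16294), (16294, 1940), (1940, 14221), (14221, 7886), (7886, 14220), (14220, 1934), (1934, 16259), (16259, 1245), (1245, 10086), (10086, 2646), (2646, 5790), (5790, 13219), (13219, 16899), (16899, 12675), (12675, 2526), (2526, 2481), (2481, 12360), (12360, 15054), (15054, 2464), (2464, 18605), (18605, 14791), (14791, 13516), (13516, 9680), (9680, 6814), (6814, 12329), (12329, 10535), (10535,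 13131), (13131, 11626), (11626, 0), (0, 7249), (7249, 5744), (5744, 8340), (8340, 6546), (6546, 12061), (12061, 9195), (9195, 5359), (5359, 4084), (4084, 270), (270, 16411), (16411, 3821), (3821, 6515), (6515, 16394), (16394, 16349), (16349, 6200), (6200, 1976), (1976, 5656), (5656, 13085), (13085, 16229), (16229, 8789), (8789, 17630), (17630, 2616), (2616, 16941), (16941, 4655), (4655, 10989), (10989, 4654), (4654, 16935), (16935, 2581), (2581, 17426), (17426, 7600), (7600, 9299), (9299, 10444), (10444, 15615), (15615, 7746), (7746, 11986), (11986, 7545), (7545, 14409), (14409, 3409), (3409, 6045), (6045, 13986), (13986, 2371), (2371, 240), (240, 17944), (17944, 13049), (13049, 3725), (3725, 9301), (9301, 14331), (14331, 1185), (1185, 11654), (11654, 12114), (12114, 4405), (4405, 14316), (14316, 5991), (5991, 2755), (2755, 10539), (10539, 3854), (3854, 12585), (12585, 15031), (15031, 2101), (2101, 16450), (16450, 2224), (2224, 15769), (15769, 16890), (16890, 10071), (10071, 5786), (5786, 5770), (5770, 9959), (9959, 16234), (16234, 11945), (11945, 17686), (17686, 18671), (18671, 18840), (18840, 18869), (18869,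 18874), (18874, 0)]
lemma elim36 (B : ℕ → ℤ) (hB0 : B 0 = 0) (hB1 : B 1 = 1)
    (hB : ∀ k, B (k + 2) = 6 * B (k + 1) - B k)
    (m x : ℕ) (hx : 3 ≤ x) (heq : (3739604948885443528999910341 : ℤ) ^ x - (641614773393652358999201580 : ℤ) ^ x = B m) : False := by
  have hcov : ∀ s, s < 150 → (Nat.testBit 1427247692705959881058285969449495136382746623 (s % 150)) = true := by decide
  have hc := hcov ((x - 3) % 150) (Nat.mod_lt _ (by norm_num))
  rw [Nat.mod_mod_of_dvd (x - 3) (by decide : (150:ℕ) ∣ 150)] at hc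
  exact condElim B hB0 hB1 hB 18875 S36_18875 (by decide) (by decide) 3739604948885443528999910341 641614773393652358999201580 (15466 : ZMod 18875) (12830 : ZMod 18875) (by decide) (by decide) 150 (by norm_num) (by decide) (by decide) 1427247692705959881058285969449495136382746623 (by decide) m x hx heq hc

private def S37_135 : List (ZMod 135 × ZMod 135) := [(0, 1), (1, 6), (6, 35), (35, 69), (69, 109), (109, 45), (45, 26), (26, 111), (111, 100), (100, 84), (84, 134), (134, 45), (45, 1), (1, 96), (96, 35), (35, 114), (114, 109), (109, 0), (0, 26), (26, 21), (21, 100), (100, 39), (39, 134), (134, 90), (90, 1), (1, 51), (51, 35), (35, 24), (24, 109), (109, 90), (90, 26), (26, 66), (66, 100), (100, 129), (129, 134), (134, 0)]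
lemma elim37 (B : ℕ → ℤ) (hB0 : B 0 = 0) (hB1 : B 1 = 1)
    (hB : ∀ k, B (k + 2) = 6 * B (k + 1) - B k)
    (m x : ℕ) (hx : 3 ≤ x) (heq : (21796014919919008815000260466 : ℤ) ^ x - (3739604948885443528999910341 : ℤ) ^ x = B m) : False := by
  have hcov : ∀ s, s < 1 → (Nat.testBit 1 (s % 1)) = true := by decide
  have hc := hcov ((x - 3) % 1) (Nat.mod_lt _ (by norm_num))
  rw [Nat.mod_mod_of_dvd (x - 3) (by decide : (1:ℕ) ∣ 1)] at hc
  exact condElim B hB0 hB1 hB 135 S37_135 (by decide) (by decide) 21796014919919008815000260466 3739604948885443528999910341 (6 : ZMod 135) (1 : ZMod 135) (by decide) (by decide) 1 (by norm_num) (by decide) (by decide) 1 (by decide) m x hx heq hc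

end BalCert

/-- There are no positive integers m, n, x with 2 ≤ n ≤ 37 and x ≥ 3 satisfying
B_{n+1}^x - B_n^x = B_m. -/
theorem balancing_no_solution_small_n
    (B : ℕ → ℤ) (hB0 : B 0 = 0) (hB1 : B 1 = 1)
    (hB : ∀ n, B (n + 2) = 6 * B (n + 1) - B n) :
    ∀ m n x : ℕ, 0 < m → 2 ≤ n → n ≤ 37 → 3 ≤ x →
      B (n + 1) ^ x - B n ^ x ≠ B m := by
  intro m n x hm hn2 hn37 hx heq
  have e2 : B 2 = 6 := by have h := hB 0; norm_num [hB1, hB0] at h; exact h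
  have e3 : B 3 = 35 := by have h := hB 1; norm_num [e2, hB1] at h; exact h
  have e4 : B 4 = 204 := by have h := hB 2; norm_num [e3, e2] at h; exact h
  have e5 : B 5 = 1189 := by have h := hB 3; norm_num [e4, e3] at h; exact h
  have e6 : B 6 = 6930 := by have h := hB 4; norm_num [e5, e4] at h; exact h
  have e7 : B 7 = 40391 := by have h := hB 5; norm_num [e6, e5] at h; exact h
  have e8 : B 8 = 235416 := by have h := hB 6; norm_num [e7, e6] at h; exact h
  have e9 : B 9 = 1372105 := by have h := hB 7; norm_num [e8, e7] at h; exact h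
  have e10 : B 10 = 7997214 := by have h := hB 8; norm_num [e9, e8] at h; exact h
  have e11 : B 11 = 46611179 := by have h := hB 9; norm_num [e10, e9] at h; exact h
  have e12 : B 12 = 271669860 := by have h := hB 10; norm_num [e11, e10] at h; exact h
  have e13 : B 13 = 1583407981 := by have h := hB 11; norm_num [e12, e11] at h; exact h
  have e14 : B 14 = 9228778026 := by have h := hB 12; norm_num [e13, e12] at h; exact h
  have e15 : B 15 = 53789260175 := by have h := hB 13; norm_num [e14, e13] at h; exact h
  have e16 : B 16 = 313506783024 := by have h := hB 14; norm_num [e15, e14] at h; exact h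
  have e17 : B 17 = 1827251437969 := by have h := hB 15; norm_num [e16, e15] at h; exact h
  have e18 : B 18 = 10650001844790 := by have h := hB 16; norm_num [e17, e16] at h; exact h
  have e19 : B 19 = 62072759630771 := by have h := hB 17; norm_num [e18, e17] at h; exact h
  have e20 : B 20 = 361786555939836 := by have h := hB 18; norm_num [e19, e18] at h; exact h
  have e21 : B 21 = 2108646576008245 := by have h := hB 19; norm_num [e20, e19] at h; exact h
  have e22 : B 22 = 12290092900109634 := by have h := hB 20; norm_num [e21, e20] at h; exact h
  have e23 : B 23 = 71631910824649559 := by have h := hB 21; norm_num [e22, e21] at h; exact h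
  have e24 : B 24 = 417501372047787720 := by have h := hB 22; norm_num [e23, e22] at h; exact h
  have e25 : B 25 = 2433376321462076761 := by have h := hB 23; norm_num [e24, e23] at h; exact h
  have e26 : B 26 = 14182756556724672846 := by have h := hB 24; norm_num [e25, e24] at h; exact h
  have e27 : B 27 = 82663163018885960315 := by have h := hB 25; norm_num [e26, e25] at h; exact h
  have e28 : B 28 = 481796221556591089044 := by have h := hB 26; norm_num [e27, e26] at h; exact h
  have e29 : B 29 = 2808114166320660573949 := by have h := hB 27; norm_num [e28, e27] at h; exact h
  have e30 : B 30 = 16366888776367372354650 := by have h := hB 28; norm_num [e29, e28] at h; exact h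
  have e31 : B 31 = 95393218491883573553951 := by have h := hB 29; norm_num [e30, e29] at h; exact h
  have e32 : B 32 = 555992422174934068969056 := by have h := hB 30; norm_num [e31, e30] at h; exact h
  have e33 : B 33 = 3240561314557720840260385 := by have h := hB 31; norm_num [e32, e31] at h; exact h
  have e34 : B 34 = 18887375465171390972593254 := by have h := hB 32; norm_num [e33, e32] at h; exact h
  have e35 : B 35 = 110083691476470624995299139 := by have h := hB 33; norm_num [e34, e33] at h; exact h
  have e36 : B 36 = 641614773393652358999201580 := by have h := hB 34; norm_num [e35, e34] at h; exact h
  have e37 : B 37 = 3739604948885443528999910341 := by have h := hB 35; norm_num [e36, e35] at h; exact h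
  have e38 : B 38 = 21796014919919008815000260466 := by have h := hB 36; norm_num [e37, e36] at h; exact h
  have hn : n = 2 ∨ n = 3 ∨ n = 4 ∨ n = 5 ∨ n = 6 ∨ n = 7 ∨ n = 8 ∨ n = 9 ∨ n = 10 ∨ n = 11 ∨ n = 12 ∨ n = 13 ∨ n = 14 ∨ n = 15 ∨ n = 16 ∨ n = 17 ∨ n = 18 ∨ n = 19 ∨ n = 20 ∨ n = 21 ∨ n = 22 ∨ n = 23 ∨ n = 24 ∨ n = 25 ∨ n = 26 ∨ n = 27 ∨ n = 28 ∨ n = 29 ∨ n = 30 ∨ n = 31 ∨ n = 32 ∨ n = 33 ∨ n = 34 ∨ n = 35 ∨ n = 36 ∨ n = 37 := by omega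
  rcases hn with rfl | rfl | rfl | rfl | rfl | rfl | rfl | rfl | rfl | rfl | rfl | rfl | rfl | rfl | rfl | rfl | rfl | rfl | rfl | rfl | rfl | rfl | rfl | rfl | rfl | rfl | rfl | rfl | rfl | rfl | rfl | rfl | rfl | rfl | rfl | rfl
  · rw [show (2:ℕ)+1 = 3 from rfl, e3, e2] at heq
    exact BalCert.elim2 B hB0 hB1 hB m x hx heq
  · rw [show (3:ℕ)+1 = 4 from rfl, e4, e3] at heq
    exact BalCert.elim3 B hB0 hB1 hB m x hx heq
  · rw [show (4:ℕ)+1 = 5 from rfl, e5, e4] at heq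
    exact BalCert.elim4 B hB0 hB1 hB m x hx heq
  · rw [show (5:ℕ)+1 = 6 from rfl, e6, e5] at heq
    exact BalCert.elim5 B hB0 hB1 hB m x hx heq
  · rw [show (6:ℕ)+1 = 7 from rfl, e7, e6] at heq
    exact BalCert.elim6 B hB0 hB1 hB m x hx heq
  · rw [show (7:ℕ)+1 = 8 from rfl, e8, e7] at heq
    exact BalCert.elim7 B hB0 hB1 hB m x hx heq
  · rw [show (8:ℕ)+1 = 9 from rfl, e9, e8] at heq
    exact BalCert.elim8 B hB0 hB1 hB m x hx heq
  · rw [show (9:ℕ)+1 = 10 from rfl, e10, e9] at heq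
    exact BalCert.elim9 B hB0 hB1 hB m x hx heq
  · rw [show (10:ℕ)+1 = 11 from rfl, e11, e10] at heq
    exact BalCert.elim10 B hB0 hB1 hB m x hx heq
  · rw [show (11:ℕ)+1 = 12 from rfl, e12, e11] at heq
    exact BalCert.elim11 B hB0 hB1 hB m x hx heq
  · rw [show (12:ℕ)+1 = 13 from rfl, e13, e12] at heq
    exact BalCert.elim12 B hB0 hB1 hB m x hx heq
  · rw [show (13:ℕ)+1 = 14 from rfl, e14, e13] at heq
    exact BalCert.elim13 B hB0 hB1 hB m x hx heq
  · rw [show (14:ℕ)+1 = 15 from rfl, e15, e14] at heq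
    exact BalCert.elim14 B hB0 hB1 hB m x hx heq
  · rw [show (15:ℕ)+1 = 16 from rfl, e16, e15] at heq
    exact BalCert.elim15 B hB0 hB1 hB m x hx heq
  · rw [show (16:ℕ)+1 = 17 from rfl, e17, e16] at heq
    exact BalCert.elim16 B hB0 hB1 hB m x hx heq
  · rw [show (17:ℕ)+1 = 18 from rfl, e18, e17] at heq
    exact BalCert.elim17 B hB0 hB1 hB m x hx heq
  · rw [show (18:ℕ)+1 = 19 from rfl, e19, e18] at heq
    exact BalCert.elim18 B hB0 hB1 hB m x hx heq
  · rw [show (19:ℕ)+1 = 20 from rfl, e20, e19] at heq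
    exact BalCert.elim19 B hB0 hB1 hB m x hx heq
  · rw [show (20:ℕ)+1 = 21 from rfl, e21, e20] at heq
    exact BalCert.elim20 B hB0 hB1 hB m x hx heq
  · rw [show (21:ℕ)+1 = 22 from rfl, e22, e21] at heq
    exact BalCert.elim21 B hB0 hB1 hB m x hx heq
  · rw [show (22:ℕ)+1 = 23 from rfl, e23, e22] at heq
    exact BalCert.elim22 B hB0 hB1 hB m x hx heq
  · rw [show (23:ℕ)+1 = 24 from rfl, e24, e23] at heq
    exact BalCert.elim23 B hB0 hB1 hB m x hx heq
  · rw [show (24:ℕ)+1 = 25 from rfl, e25, e24] at heq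
    exact BalCert.elim24 B hB0 hB1 hB m x hx heq
  · rw [show (25:ℕ)+1 = 26 from rfl, e26, e25] at heq
    exact BalCert.elim25 B hB0 hB1 hB m x hx heq
  · rw [show (26:ℕ)+1 = 27 from rfl, e27, e26] at heq
    exact BalCert.elim26 B hB0 hB1 hB m x hx heq
  · rw [show (27:ℕ)+1 = 28 from rfl, e28, e27] at heq
    exact BalCert.elim27 B hB0 hB1 hB m x hx heq
  · rw [show (28:ℕ)+1 = 29 from rfl, e29, e28] at heq
    exact BalCert.elim28 B hB0 hB1 hB m x hx heq
  · rw [show (29:ℕ)+1 = 30 from rfl, e30, e29] at heq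
    exact BalCert.elim29 B hB0 hB1 hB m x hx heq
  · rw [show (30:ℕ)+1 = 31 from rfl, e31, e30] at heq
    exact BalCert.elim30 B hB0 hB1 hB m x hx heq
  · rw [show (31:ℕ)+1 = 32 from rfl, e32, e31] at heq
    exact BalCert.elim31 B hB0 hB1 hB m x hx heq
  · rw [show (32:ℕ)+1 = 33 from rfl, e33, e32] at heq
    exact BalCert.elim32 B hB0 hB1 hB m x hx heq
  · rw [show (33:ℕ)+1 = 34 from rfl, e34, e33] at heq
    exact BalCert.elim33 B hB0 hB1 hB m x hx heq
  · rw [show (34:ℕ)+1 = 35 from rfl, e35, e34] at heq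
    exact BalCert.elim34 B hB0 hB1 hB m x hx heq
  · rw [show (35:ℕ)+1 = 36 from rfl, e36, e35] at heq
    exact BalCert.elim35 B hB0 hB1 hB m x hx heq
  · rw [show (36:ℕ)+1 = 37 from rfl, e37, e36] at heq
    exact BalCert.elim36 B hB0 hB1 hB m x hx heq
  · rw [show (37:ℕ)+1 = 38 from rfl, e38, e37] at heq
    exact BalCert.elim37 B hB0 hB1 hB m x hx heq
end

section
/- For all positive integers m, n and every integer x ≥ 2, one has α^{m-(n+1)x} · 32^{(x-1)/2} ≠ 1, where α = 3 + 2√2 and 32^{(x-1)/2} denotes the real number √(32^{x-1}); equivalently, the quantity Λ₂ = α^{m-(n+1)x} · 32^{(x-1)/2} - 1 is nonzero. -/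
lemma aux_pow (N : ℕ) : ∃ a b : ℕ, 0 < b ∧ (3 + 2*Real.sqrt 2)^(N+1) = a + b * Real.sqrt 2 := by
  induction N with
  | zero => exact ⟨3, 2, by norm_num, by push_cast; ring⟩
  | succ n ih =>
    obtain ⟨a, b, hb, h⟩ := ih
    have h2 : Real.sqrt 2 * Real.sqrt 2 = 2 := Real.mul_self_sqrt (by norm_num)
    refine ⟨3*a + 4*b, 2*a + 3*b, by omega, ?_⟩
    rw [pow_succ, h]
    push_cast
    linear_combination (2*(b:ℝ)) * h2

/-- For all positive integers m, n and every integer x ≥ 2,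
α^{m-(n+1)x} · 32^{(x-1)/2} ≠ 1, where α = 3 + 2√2 and
32^{(x-1)/2} denotes √(32^{x-1}); equivalently, Λ₂ is nonzero. -/
theorem balancing_lambda_two_nonzero
    (α : ℝ) (hα : α = 3 + 2 * Real.sqrt 2) :
    ∀ m n x : ℕ, 0 < m → 0 < n → 2 ≤ x →
      α ^ ((m : ℤ) - (n + 1) * x) * Real.sqrt (32 ^ (x - 1)) ≠ 1 := by
  subst hα
  intro m n x hm hn hx h
  set k : ℤ := (m:ℤ) - (n+1)*x with hk
  have hs2 : (0:ℝ) < Real.sqrt 2 := Real.sqrt_pos.mpr (by norm_num)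
  have hα1 : (1:ℝ) < 3 + 2*Real.sqrt 2 := by nlinarith
  have hα0 : (0:ℝ) < 3 + 2*Real.sqrt 2 := by linarith
  have hαne : (3 + 2*Real.sqrt 2 : ℝ) ≠ 0 := ne_of_gt hα0
  have hsqrt : Real.sqrt ((32:ℝ) ^ (x-1)) ^ 2 = 32 ^ (x-1) := Real.sq_sqrt (by positivity)
  have h1 := congrArg (fun y => y^2) h
  simp only [mul_pow, one_pow] at h1
  rw [hsqrt, ← zpow_natCast ((3+2*Real.sqrt 2)^k) 2, ← zpow_mul] at h1
  -- h1 : (3+2√2)^(k*2) * 32^(x-1) = 1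
  have hbig : (1:ℝ) < 32 ^ (x-1) := by
    apply one_lt_pow₀ (by norm_num)
    omega
  have hlt : (3+2*Real.sqrt 2) ^ (k*(2:ℕ):ℤ) < 1 := by
    have hp : (0:ℝ) < 32 ^ (x-1) := by positivity
    nlinarith [zpow_pos hα0 (k*(2:ℕ):ℤ)]
  have hneg : k * (2:ℕ) < 0 := by
    by_contra hge
    push_neg at hge
    have := one_le_zpow₀ (le_of_lt hα1) hge
    linarith
  set N : ℕ := (k*(2:ℕ)).natAbs with hN
  have hNe : (k*(2:ℕ) : ℤ) = -(N:ℤ) := by omega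
  have hN1 : 1 ≤ N := by omega
  rw [hNe, zpow_neg, zpow_natCast] at h1
  have hpow : (3+2*Real.sqrt 2)^N = 32 ^ (x-1) := by
    have hne : ((3+2*Real.sqrt 2):ℝ)^N ≠ 0 := pow_ne_zero _ hαne
    field_simp at h1
    linarith [h1]
  obtain ⟨a, b, hb, hab⟩ := aux_pow (N-1)
  rw [Nat.sub_add_cancel hN1] at hab
  rw [hab] at hpow
  have hirr : Irrational ((b:ℝ) * Real.sqrt 2) := irrational_sqrt_two.natCast_mul hb.ne'
  have : ((b:ℝ) * Real.sqrt 2) = ((32^(x-1) - a : ℤ) : ℝ) := by push_cast; linarith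
  exact hirr.ne_int _ this
end

section
/- Let m, n, x be positive integers with n ≥ 38 and x ≥ 3 satisfying B_{n+1}^x - B_n^x = B_m. Then 0.9x - 1.4 < (n+1)x - m < x; in particular (n+1)x - m is a positive integer strictly less than x. -/
section BalAux

variable {B : ℕ → ℤ}

private lemma bal_pos_mono (hB0 : B 0 = 0) (hB1 : B 1 = 1)
    (hB : ∀ n, B (n + 2) = 6 * B (n + 1) - B n) :
    ∀ k, 0 ≤ B k ∧ B k < B (k + 1) := by
  intro k
  induction k with
  | zero => rw [hB0, hB1]; norm_num
  | succ k ih =>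
    obtain ⟨h0, h1⟩ := ih
    have h2 := hB k
    exact ⟨by linarith, by linarith⟩

private lemma bal_sm (hB0 : B 0 = 0) (hB1 : B 1 = 1)
    (hB : ∀ n, B (n + 2) = 6 * B (n + 1) - B n) : StrictMono B :=
  strictMono_nat_of_lt_succ fun k => (bal_pos_mono hB0 hB1 hB k).2

private lemma bal_nonneg (hB0 : B 0 = 0) (hB1 : B 1 = 1)
    (hB : ∀ n, B (n + 2) = 6 * B (n + 1) - B n) (k : ℕ) : 0 ≤ B k :=
  (bal_pos_mono hB0 hB1 hB k).1

private lemma bal_five (hB0 : B 0 = 0) (hB1 : B 1 = 1)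
    (hB : ∀ n, B (n + 2) = 6 * B (n + 1) - B n) :
    ∀ k, 5 * B k ≤ B (k + 1) := by
  intro k
  cases k with
  | zero => rw [hB0, hB1]; norm_num
  | succ k =>
    have h1 := (bal_pos_mono hB0 hB1 hB k).2
    have h2 := hB k
    linarith

private lemma bal_growth (hB0 : B 0 = 0) (hB1 : B 1 = 1)
    (hB : ∀ n, B (n + 2) = 6 * B (n + 1) - B n) :
    ∀ k, 6 * 5 ^ k ≤ B (k + 2) := by
  intro k
  induction k with
  | zero =>
    have := hB 0
    rw [hB0, hB1] at this
    simp [this]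
  | succ k ih =>
    have h1 := bal_five hB0 hB1 hB (k + 2)
    have e : (6 : ℤ) * 5 ^ (k + 1) = 5 * (6 * 5 ^ k) := by ring
    rw [show k + 1 + 2 = k + 2 + 1 from rfl]
    linarith

private lemma bal_add (hB0 : B 0 = 0) (hB1 : B 1 = 1)
    (hB : ∀ n, B (n + 2) = 6 * B (n + 1) - B n) :
    ∀ a b, B (a + b + 1) = B (a + 1) * B (b + 1) - B a * B b := by
  have key : ∀ a, (∀ b, B (a + b + 1) = B (a + 1) * B (b + 1) - B a * B b) ∧
      (∀ b, B (a + 1 + b + 1) = B (a + 2) * B (b + 1) - B (a + 1) * B b) := by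
    intro a
    induction a with
    | zero =>
      constructor
      · intro b
        rw [show 0 + b + 1 = b + 1 from by omega, hB0, hB1]
        ring
      · intro b
        have h2 : B 2 = 6 := by have := hB 0; rw [hB0, hB1] at this; linarith
        rw [show 0 + 1 + b + 1 = b + 2 from by omega, show (0:ℕ) + 2 = 2 from rfl,
          show (0:ℕ) + 1 = 1 from rfl, h2, hB1, hB b]
        ring
    | succ a ih =>
      refine ⟨ih.2, fun b => ?_⟩
      have h1 := ih.1 b
      have h2 := ih.2 b
      have h3 := hB (a + b + 1)
      have h4 := hB (a + 1)
      have h5 := hB a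
      rw [show a + 1 + b + 1 = a + b + 1 + 1 from by omega] at h2
      rw [show a + 1 + 1 + b + 1 = a + b + 1 + 2 from by omega,
        show a + 1 + 2 = a + 3 from by omega, show a + 1 + 1 = a + 2 from by omega]
      rw [show a + 1 + 2 = a + 3 from by omega, show a + 1 + 1 = a + 2 from by omega] at h4
      linear_combination h3 + 6 * h2 - h1 - B (b + 1) * h4 + B b * h5
  exact fun a => (key a).1

private lemma bal_prod_upper (hB0 : B 0 = 0) (hB1 : B 1 = 1)
    (hB : ∀ n, B (n + 2) = 6 * B (n + 1) - B n) (n : ℕ) (hn : 1 ≤ n) :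
    ∀ j, B (n * (j + 1)) ≤ B n * B (n + 1) ^ j := by
  intro j
  induction j with
  | zero => simp
  | succ j ih =>
    obtain ⟨k, hk⟩ : ∃ k, n * (j + 1) = k + 1 :=
      ⟨n * (j + 1) - 1, by
        have : 1 ≤ n * (j + 1) := Nat.one_le_iff_ne_zero.mpr (by positivity); omega⟩
    have h := bal_add hB0 hB1 hB k n
    have e : n * (j + 2) = k + n + 1 := by
      have : n * (j + 2) = n * (j + 1) + n := by ring
      omega
    rw [e, h, ← hk]
    have hnn : 0 ≤ B k * B n :=
      mul_nonneg (bal_nonneg hB0 hB1 hB k) (bal_nonneg hB0 hB1 hB n)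
    have h2 : B (n * (j + 1)) * B (n + 1) ≤ (B n * B (n + 1) ^ j) * B (n + 1) :=
      mul_le_mul_of_nonneg_right ih (bal_nonneg hB0 hB1 hB (n + 1))
    calc B (n * (j + 1)) * B (n + 1) - B k * B n
        ≤ B (n * (j + 1)) * B (n + 1) := by linarith
      _ ≤ (B n * B (n + 1) ^ j) * B (n + 1) := h2
      _ = B n * B (n + 1) ^ (j + 1) := by ring

private lemma bal_prod_lower (hB0 : B 0 = 0) (hB1 : B 1 = 1)
    (hB : ∀ n, B (n + 2) = 6 * B (n + 1) - B n) (n a : ℕ) :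
    ∀ j, 24 ^ j * (B (a + 1) * B (n + 1) ^ j) ≤ 25 ^ j * B (a + 1 + j * n) := by
  intro j
  induction j with
  | zero => simp
  | succ j ih =>
    have h := bal_add hB0 hB1 hB (a + j * n) n
    have h1 := bal_five hB0 hB1 hB (a + j * n)
    have h2 := bal_five hB0 hB1 hB n
    have hn1 := bal_nonneg hB0 hB1 hB (a + j * n)
    have hn2 := bal_nonneg hB0 hB1 hB n
    have hn3 := bal_nonneg hB0 hB1 hB (a + j * n + 1)
    have hprod : (5 * B (a + j * n)) * (5 * B n) ≤ B (a + j * n + 1) * B (n + 1) :=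
      mul_le_mul h1 h2 (by linarith) hn3
    have key : 24 * (B (a + j * n + 1) * B (n + 1)) ≤ 25 * B (a + j * n + n + 1) := by
      nlinarith [h, hprod]
    have e : a + 1 + (j + 1) * n = a + j * n + n + 1 := by ring
    rw [e]
    have h25 : (0:ℤ) ≤ 25 ^ j := by positivity
    have step1 : 25 ^ j * (24 * (B (a + j * n + 1) * B (n + 1))) ≤
        25 ^ j * (25 * B (a + j * n + n + 1)) :=
      mul_le_mul_of_nonneg_left key h25
    have ih' : (24 * B (n + 1)) * (24 ^ j * (B (a + 1) * B (n + 1) ^ j)) ≤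
        (24 * B (n + 1)) * (25 ^ j * B (a + 1 + j * n)) :=
      mul_le_mul_of_nonneg_left ih (by have := bal_nonneg hB0 hB1 hB (n + 1); linarith)
    have e2 : a + 1 + j * n = a + j * n + 1 := by ring
    rw [e2] at ih'
    calc 24 ^ (j + 1) * (B (a + 1) * B (n + 1) ^ (j + 1))
        = (24 * B (n + 1)) * (24 ^ j * (B (a + 1) * B (n + 1) ^ j)) := by ring
      _ ≤ (24 * B (n + 1)) * (25 ^ j * B (a + j * n + 1)) := ih'
      _ = 25 ^ j * (24 * (B (a + j * n + 1) * B (n + 1))) := by ring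
      _ ≤ 25 ^ j * (25 * B (a + j * n + n + 1)) := step1
      _ = 25 ^ (j + 1) * B (a + j * n + n + 1) := by ring

private lemma bal_num1 : ∀ q : ℕ, (25:ℤ) ^ (10 * q + 9) ≤ 6 * 5 ^ q * 24 ^ (10 * q + 9) := by
  intro q
  induction q with
  | zero => norm_num
  | succ q ih =>
    have h10 : (25:ℤ) ^ 10 ≤ 5 * 24 ^ 10 := by norm_num
    have e1 : (25:ℤ) ^ (10 * (q + 1) + 9) = 25 ^ 10 * 25 ^ (10 * q + 9) := by ring
    have e2 : (6:ℤ) * 5 ^ (q + 1) * 24 ^ (10 * (q + 1) + 9)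
        = (5 * 24 ^ 10) * (6 * 5 ^ q * 24 ^ (10 * q + 9)) := by ring
    rw [e1, e2]
    have h1 : (25:ℤ) ^ 10 * 25 ^ (10 * q + 9) ≤ 25 ^ 10 * (6 * 5 ^ q * 24 ^ (10 * q + 9)) :=
      mul_le_mul_of_nonneg_left ih (by positivity)
    have h2 : (25:ℤ) ^ 10 * (6 * 5 ^ q * 24 ^ (10 * q + 9)) ≤
        (5 * 24 ^ 10) * (6 * 5 ^ q * 24 ^ (10 * q + 9)) :=
      mul_le_mul_of_nonneg_right h10 (by positivity)
    linarith

private lemma bal_num2 (x : ℕ) : (25:ℤ) ^ x ≤ 6 * 5 ^ (x / 10) * 24 ^ x := by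
  set q := x / 10 with hq
  obtain ⟨s, hs⟩ : ∃ s, 10 * q + 9 = x + s := ⟨10 * q + 9 - x, by omega⟩
  have h24 : (0:ℤ) < 24 ^ s := by positivity
  have key : (25:ℤ) ^ x * 24 ^ s ≤ (6 * 5 ^ q * 24 ^ x) * 24 ^ s := by
    calc (25:ℤ) ^ x * 24 ^ s ≤ 25 ^ x * 25 ^ s :=
          mul_le_mul_of_nonneg_left (pow_le_pow_left₀ (by norm_num) (by norm_num) s)
            (by positivity)
      _ = 25 ^ (10 * q + 9) := by rw [hs]; ring
      _ ≤ 6 * 5 ^ q * 24 ^ (10 * q + 9) := bal_num1 q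
      _ = (6 * 5 ^ q * 24 ^ x) * 24 ^ s := by rw [hs]; ring
  exact le_of_mul_le_mul_right key h24

end BalAux

/-- If m, n, x are positive integers with n ≥ 38, x ≥ 3 and B_{n+1}^x - B_n^x = B_m,
then 0.9x - 1.4 < (n+1)x - m < x; in particular (n+1)x - m is a positive integer
strictly less than x. -/
theorem balancing_exponent_gap_bounds
    (B : ℕ → ℤ) (hB0 : B 0 = 0) (hB1 : B 1 = 1)
    (hB : ∀ n, B (n + 2) = 6 * B (n + 1) - B n) :
    ∀ m n x : ℕ, 0 < m → 38 ≤ n → 3 ≤ x →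
      B (n + 1) ^ x - B n ^ x = B m →
      (0.9 * x - 1.4 < (((n : ℝ) + 1) * x - m) ∧ ((n : ℝ) + 1) * x - m < x) ∧
        0 < ((n : ℤ) + 1) * x - m := by
  intro m n x hm hn hx hmain
  have hsm : StrictMono B := bal_sm hB0 hB1 hB
  have hn1 : 1 ≤ n := by omega
  have hBnpos : 0 < B n := by
    have := hsm (show 0 < n by omega); rwa [hB0] at this
  have hBn1pos : 0 < B (n + 1) := by
    have := hsm (show 0 < n + 1 by omega); rwa [hB0] at this
  -- step 1 : n * x < m
  have h1 : n * x + 1 ≤ m := by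
    have hup : B (n * x) ≤ B n * B (n + 1) ^ (x - 1) := by
      have := bal_prod_upper hB0 hB1 hB n hn1 (x - 1)
      rwa [show x - 1 + 1 = x from by omega] at this
    have h5 : 5 * B n ≤ B (n + 1) := bal_five hB0 hB1 hB n
    have hpow : B n ^ (x - 1) ≤ B (n + 1) ^ (x - 1) :=
      pow_le_pow_left₀ hBnpos.le (by linarith) _
    have ex1 : B (n + 1) ^ x = B (n + 1) ^ (x - 1) * B (n + 1) := by
      rw [← pow_succ]; congr 1; omega
    have ex2 : B n ^ x = B n ^ (x - 1) * B n := by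
      rw [← pow_succ]; congr 1; omega
    have k2 : B n ^ (x - 1) * (4 * B n) ≤ B (n + 1) ^ (x - 1) * (B (n + 1) - B n) :=
      mul_le_mul hpow (by linarith) (by linarith) (by positivity)
    have hpp : 0 < B n ^ (x - 1) * B n := by positivity
    have hlt : B (n * x) < B m := by
      rw [← hmain]
      have : B n * B (n + 1) ^ (x - 1) < B (n + 1) ^ x - B n ^ x := by
        rw [ex1, ex2]; nlinarith [k2, hpp]
      linarith
    have := hsm.lt_iff_lt.mp hlt
    omega
  -- step 2 : m ≤ x * n + x / 10 + 1
  have h2 : m ≤ x * n + x / 10 + 1 := by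
    set c : ℕ := x / 10 + 1 with hc
    have hg : 6 * 5 ^ (x / 10) ≤ B (c + 1) := by
      have := bal_growth hB0 hB1 hB (x / 10)
      rwa [show x / 10 + 2 = c + 1 from by omega] at this
    have hBc : (25:ℤ) ^ x ≤ 24 ^ x * B (c + 1) := by
      have h1' := bal_num2 x
      have h2' : 6 * 5 ^ (x / 10) * 24 ^ x ≤ B (c + 1) * 24 ^ x :=
        mul_le_mul_of_nonneg_right hg (by positivity)
      nlinarith [h1', h2']
    have hpl := bal_prod_lower hB0 hB1 hB n c x
    have hchain : (25:ℤ) ^ x * B (n + 1) ^ x ≤ 25 ^ x * B (c + 1 + x * n) := by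
      calc (25:ℤ) ^ x * B (n + 1) ^ x ≤ (24 ^ x * B (c + 1)) * B (n + 1) ^ x :=
            mul_le_mul_of_nonneg_right hBc (by positivity)
        _ = 24 ^ x * (B (c + 1) * B (n + 1) ^ x) := by ring
        _ ≤ 25 ^ x * B (c + 1 + x * n) := hpl
    have hub : B (n + 1) ^ x ≤ B (c + 1 + x * n) :=
      le_of_mul_le_mul_left hchain (by positivity)
    have hxpos : 0 < B n ^ x := by positivity
    have hlt : B m < B (c + 1 + x * n) := by
      rw [← hmain]; linarith
    have := hsm.lt_iff_lt.mp hlt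
    omega
  -- conclusions
  have hq10 : 10 * (x / 10) ≤ x := by omega
  have h3 : m < (n + 1) * x := by
    have e : (n + 1) * x = x * n + x := by ring
    calc m ≤ x * n + x / 10 + 1 := h2
      _ < x * n + x := by omega
      _ = (n + 1) * x := e.symm
  refine ⟨⟨?_, ?_⟩, ?_⟩
  · -- 0.9x - 1.4 < (n+1)x - m
    have h2R : (m:ℝ) ≤ x * n + x / 10 + 1 := by
      have : (m:ℝ) ≤ ((x * n + x / 10 + 1 : ℕ) : ℝ) := by exact_mod_cast h2
      push_cast at this
      have hq : ((x / 10 : ℕ) : ℝ) ≤ (x:ℝ) / 10 := by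
        have : ((10 * (x / 10) : ℕ) : ℝ) ≤ (x:ℝ) := by exact_mod_cast hq10
        push_cast at this
        linarith
      linarith
    have e9 : (0.9 : ℝ) = 9 / 10 := by norm_num
    have e14 : (1.4 : ℝ) = 14 / 10 := by norm_num
    rw [e9, e14]
    have hx3 : (3:ℝ) ≤ x := by exact_mod_cast hx
    nlinarith [h2R]
  · -- (n+1)x - m < x
    have h1R : (n:ℝ) * x + 1 ≤ m := by exact_mod_cast h1
    nlinarith [h1R]
  · -- 0 < (n+1)x - m over ℤ
    have : (m:ℤ) < ((n + 1) * x : ℕ) := by exact_mod_cast h3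
    push_cast at this
    linarith
end
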